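/- arXiv:1309.6085 — 4 statements merged into one kernel-verified Lean document; each statement's English description precedes it below -/
import Mathlib

section
/- Let E, F be vector lattices with F Dedekind complete, φ : E → ℝ a positive abstract Uryson functional, u ∈ F₊, and S = φ ⊗ u the one-dimensional operator Se = φ(e)u. Then for every positive abstract Uryson operator T and e ∈ E, the band projection onto {S}^⊥ satisfies σ_S T e = ρ_u^⊥ T e + inf over ε > 0 of sup{ ρ_u T f : φ(f) ≤ ε φ(e), f a fragment of e }, where ρ_u is the band projection onto {u}^⊥⊥. -/
/-- Orthogonal additivity: `T (x + y) = T x + T y` whenever `|x| ⊓ |y| = 0`. -/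
def OrthAdd {E F : Type*} [Lattice E] [AddCommGroup E] [AddCommGroup F]
    (T : E → F) : Prop :=
  ∀ x y : E, |x| ⊓ |y| = 0 → T (x + y) = T x + T y

/-- `T` maps order bounded sets to order bounded sets. -/
def OrderBoundedMap {E F : Type*} [Preorder E] [Preorder F] (T : E → F) : Prop :=
  ∀ a b : E, ∃ c d : F, ∀ x ∈ Set.Icc a b, T x ∈ Set.Icc c d

/-- An abstract Uryson operator: orthogonally additive and order bounded. -/
def Uryson {E F : Type*} [Lattice E] [AddCommGroup E] [Lattice F] [AddCommGroup F]
    (T : E → F) : Prop :=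
  OrthAdd T ∧ OrderBoundedMap T

/-- `z` is a fragment (component) of `x`: `z ⊥ (x - z)`. -/
def Fragment {E : Type*} [Lattice E] [AddCommGroup E] (z x : E) : Prop :=
  |z| ⊓ |x - z| = 0

/-- A band (order) projection on a Dedekind complete vector lattice `F`:
additive, idempotent, and `0 ≤ ρ x ≤ x` for all `x ≥ 0`. -/
def IsBandProj {F : Type*} [Lattice F] [AddCommGroup F] (ρ : F → F) : Prop :=
  (∀ x y : F, ρ (x + y) = ρ x + ρ y) ∧ (∀ x, ρ (ρ x) = ρ x) ∧
    ∀ x : F, 0 ≤ x → 0 ≤ ρ x ∧ ρ x ≤ x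

/-- Disjointness of two positive abstract Uryson operators `T, S` in `U(E,F)`:
`T ⊓ S = 0`, i.e. every abstract Uryson operator `R` with `R ≤ T` and `R ≤ S`
(pointwise, which is the order of `U(E,F)`) satisfies `R ≤ 0`. -/
def UDisjointPos {E F : Type*} [Lattice E] [AddCommGroup E] [Lattice F] [AddCommGroup F]
    (T S : E → F) : Prop :=
  ∀ R : E → F, Uryson R → (∀ x, R x ≤ T x) → (∀ x, R x ≤ S x) → ∀ x, R x ≤ 0

set_option linter.unusedSectionVars false
set_option maxHeartbeats 1000000
namespace St9



section LatGrp
variable {α : Type*} [Lattice α] [AddCommGroup α] [CovariantClass α α (· + ·) (· ≤ ·)]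

/-- Riesz decomposition style inequality for nonnegative elements. -/
lemma riesz {a b c : α} (ha : 0 ≤ a) (hb : 0 ≤ b) (hc : 0 ≤ c) :
    a ⊓ (b + c) ≤ a ⊓ b + a ⊓ c := by
  have hab : (0:α) ≤ a ⊓ b := le_inf ha hb
  have h1 : a ⊓ (b + c) ≤ (a ⊓ b) + c := by
    calc a ⊓ (b + c) ≤ (a + c) ⊓ (b + c) :=
          inf_le_inf_right _ (le_add_of_nonneg_right hc)
      _ = (a ⊓ b) + c := (inf_add a b c).symm
  calc a ⊓ (b + c) ≤ ((a ⊓ b) + a) ⊓ ((a ⊓ b) + c) :=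
        le_inf (inf_le_left.trans (le_add_of_nonneg_left hab)) h1
    _ = (a ⊓ b) + (a ⊓ c) := (add_inf a c (a ⊓ b)).symm

lemma disj_mono {a b a' b' : α} (ha' : 0 ≤ a') (hb' : 0 ≤ b')
    (haa : a' ≤ a) (hbb : b' ≤ b) (h : a ⊓ b = 0) : a' ⊓ b' = 0 :=
  le_antisymm ((inf_le_inf haa hbb).trans_eq h) (le_inf ha' hb')

lemma disj_nsmul_right {a b : α} (ha : 0 ≤ a) (hb : 0 ≤ b) (h : a ⊓ b = 0) :
    ∀ n : ℕ, a ⊓ (n • b) = 0 := by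
  intro n
  induction n with
  | zero => simpa using le_antisymm (inf_le_of_right_le le_rfl) (le_inf ha le_rfl)
  | succ n ih =>
      have hnb : (0:α) ≤ n • b := nsmul_nonneg hb n
      have h1 : a ⊓ ((n+1) • b) ≤ a ⊓ (n • b) + a ⊓ b := by
        rw [succ_nsmul]
        exact riesz ha hnb hb
      have : a ⊓ ((n+1) • b) ≤ 0 := by rw [ih, h] at h1; simpa using h1
      exact le_antisymm this (le_inf ha (nsmul_nonneg hb (n+1)))

lemma disj_nsmul {a b : α} (ha : 0 ≤ a) (hb : 0 ≤ b) (h : a ⊓ b = 0) (n m : ℕ) :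
    (n • a) ⊓ (m • b) = 0 := by
  have h1 : a ⊓ (m • b) = 0 := disj_nsmul_right ha hb h m
  have h2 : (m • b) ⊓ (n • a) = 0 :=
    disj_nsmul_right (nsmul_nonneg hb m) ha (by rwa [inf_comm]) n
  rwa [inf_comm]

/-- If `a ⊥ b` then `|a+b| = |a| + |b|`. -/
lemma abs_add_of_disj {a b : α} (h : |a| ⊓ |b| = 0) : |a + b| = |a| + |b| := by
  have hle : |a + b| ≤ |a| + |b| := abs_add_le a b
  have ha' : |a| ≤ |a + b| + |b| := by
    calc |a| = |(a + b) + (-b)| := by rw [add_neg_cancel_right]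
      _ ≤ |a + b| + |(-b)| := abs_add_le _ _
      _ = |a + b| + |b| := by rw [abs_neg]
  have hb' : |b| ≤ |a + b| + |a| := by
    calc |b| = |(a + b) + (-a)| := by rw [add_comm a b, add_neg_cancel_right]
      _ ≤ |a + b| + |(-a)| := abs_add_le _ _
      _ = |a + b| + |a| := by rw [abs_neg]
  have h1 : |a| ≤ |a + b| := by
    have : |a| ⊓ (|a + b| + |b|) ≤ |a| ⊓ |a + b| + |a| ⊓ |b| :=
      riesz (abs_nonneg a) (abs_nonneg _) (abs_nonneg b)
    rw [h, add_zero] at this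
    have h2 : |a| = |a| ⊓ (|a + b| + |b|) := (inf_eq_left.2 ha').symm
    calc |a| = |a| ⊓ (|a + b| + |b|) := h2
      _ ≤ |a| ⊓ |a + b| := this
      _ ≤ |a + b| := inf_le_right
  have h2 : |b| ≤ |a + b| := by
    have : |b| ⊓ (|a + b| + |a|) ≤ |b| ⊓ |a + b| + |b| ⊓ |a| :=
      riesz (abs_nonneg b) (abs_nonneg _) (abs_nonneg a)
    rw [inf_comm (a := |b|) (b := |a|), h, add_zero] at this
    have h2' : |b| = |b| ⊓ (|a + b| + |a|) := (inf_eq_left.2 hb').symm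
    calc |b| = |b| ⊓ (|a + b| + |a|) := h2'
      _ ≤ |b| ⊓ |a + b| := this
      _ ≤ |a + b| := inf_le_right
  refine le_antisymm hle ?_
  have : |a| + |b| = |a| ⊓ |b| + (|a| ⊔ |b|) := (inf_add_sup _ _).symm
  rw [this, h, zero_add]
  exact sup_le h1 h2

lemma inf_add_add_le {a b c d : α} (ha : 0 ≤ a) (hb : 0 ≤ b) (hc : 0 ≤ c) (hd : 0 ≤ d) :
    (a + b) ⊓ (c + d) ≤ (a ⊓ c + a ⊓ d) + (b ⊓ c + b ⊓ d) := by
  have h1 : (a + b) ⊓ (c + d) ≤ (a + b) ⊓ c + (a + b) ⊓ d :=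
    riesz (add_nonneg ha hb) hc hd
  have h2 : (a + b) ⊓ c ≤ a ⊓ c + b ⊓ c := by
    rw [inf_comm, inf_comm (a := a), inf_comm (a := b)]
    exact riesz hc ha hb
  have h3 : (a + b) ⊓ d ≤ a ⊓ d + b ⊓ d := by
    rw [inf_comm, inf_comm (a := a), inf_comm (a := b)]
    exact riesz hd ha hb
  calc (a + b) ⊓ (c + d) ≤ (a + b) ⊓ c + (a + b) ⊓ d := h1
    _ ≤ (a ⊓ c + b ⊓ c) + (a ⊓ d + b ⊓ d) := add_le_add h2 h3
    _ = (a ⊓ c + a ⊓ d) + (b ⊓ c + b ⊓ d) := by abel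

end LatGrp


section Frag
variable {α : Type*} [Lattice α] [AddCommGroup α] [CovariantClass α α (· + ·) (· ≤ ·)]

lemma frag_zero (x : α) : Fragment 0 x := by
  simp only [Fragment, abs_zero, sub_zero]
  exact inf_eq_left.2 (abs_nonneg x)

lemma frag_self (x : α) : Fragment x x := by
  simp only [Fragment, sub_self, abs_zero]
  exact inf_eq_right.2 (abs_nonneg x)

lemma frag_compl {f x : α} (h : Fragment f x) : Fragment (x - f) x := by
  simp only [Fragment, sub_sub_cancel]
  rw [inf_comm]; exact h

lemma frag_abs_add {f x : α} (h : Fragment f x) : |x| = |f| + |x - f| := by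
  have := abs_add_of_disj (h : |f| ⊓ |x - f| = 0)
  rwa [add_sub_cancel] at this

lemma frag_abs_le {f x : α} (h : Fragment f x) : |f| ≤ |x| := by
  rw [frag_abs_add h]; exact le_add_of_nonneg_right (abs_nonneg _)

lemma frag_trans {g f x : α} (hg : Fragment g f) (hf : Fragment f x) : Fragment g x := by
  have h1 : |x - g| ≤ |x - f| + |f - g| := by
    calc |x - g| = |(x - f) + (f - g)| := by rw [sub_add_sub_cancel]
      _ ≤ |x - f| + |f - g| := abs_add_le _ _
  have h4 : |g| ⊓ |x - f| = 0 :=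
    disj_mono (abs_nonneg g) (abs_nonneg _) (frag_abs_le hg) le_rfl hf
  have h6 : |g| ⊓ |x - g| ≤ 0 := by
    calc |g| ⊓ |x - g| ≤ |g| ⊓ (|x - f| + |f - g|) := inf_le_inf_left _ h1
      _ ≤ |g| ⊓ |x - f| + |g| ⊓ |f - g| := riesz (abs_nonneg g) (abs_nonneg _) (abs_nonneg _)
      _ = 0 := by rw [h4, (hg : |g| ⊓ |f - g| = 0), add_zero]
  exact le_antisymm h6 (le_inf (abs_nonneg g) (abs_nonneg _))

lemma frag_disj {x y f₁ f₂ : α} (hxy : |x| ⊓ |y| = 0)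
    (h1 : Fragment f₁ x) (h2 : Fragment f₂ y) : |f₁| ⊓ |f₂| = 0 :=
  disj_mono (abs_nonneg _) (abs_nonneg _) (frag_abs_le h1) (frag_abs_le h2) hxy

lemma frag_compl_disj {x y f₁ f₂ : α} (hxy : |x| ⊓ |y| = 0)
    (h1 : Fragment f₁ x) (h2 : Fragment f₂ y) : |x - f₁| ⊓ |y - f₂| = 0 :=
  frag_disj hxy (frag_compl h1) (frag_compl h2)

lemma frag_add {x y f₁ f₂ : α} (hxy : |x| ⊓ |y| = 0)
    (h1 : Fragment f₁ x) (h2 : Fragment f₂ y) : Fragment (f₁ + f₂) (x + y) := by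
  have habs1 : |f₁ + f₂| = |f₁| + |f₂| := abs_add_of_disj (frag_disj hxy h1 h2)
  have hsub : x + y - (f₁ + f₂) = (x - f₁) + (y - f₂) := by abel
  have habs2 : |x + y - (f₁ + f₂)| = |x - f₁| + |y - f₂| := by
    rw [hsub]; exact abs_add_of_disj (frag_compl_disj hxy h1 h2)
  show |f₁ + f₂| ⊓ |x + y - (f₁ + f₂)| = 0
  rw [habs1, habs2]
  refine le_antisymm ?_ (le_inf (add_nonneg (abs_nonneg _) (abs_nonneg _))
    (add_nonneg (abs_nonneg _) (abs_nonneg _)))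
  have key := inf_add_add_le (a := |f₁|) (b := |f₂|) (c := |x - f₁|) (d := |y - f₂|)
    (abs_nonneg _) (abs_nonneg _) (abs_nonneg _) (abs_nonneg _)
  have e1 : |f₁| ⊓ |x - f₁| = 0 := h1
  have e2 : |f₁| ⊓ |y - f₂| = 0 :=
    disj_mono (abs_nonneg _) (abs_nonneg _) (frag_abs_le h1) (frag_abs_le (frag_compl h2)) hxy
  have e3 : |f₂| ⊓ |x - f₁| = 0 := by
    rw [inf_comm]
    exact disj_mono (abs_nonneg _) (abs_nonneg _) (frag_abs_le (frag_compl h1))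
      (frag_abs_le h2) hxy
  have e4 : |f₂| ⊓ |y - f₂| = 0 := h2
  rw [e1, e2, e3, e4] at key
  simpa using key

lemma frag_add_within {g h x : α} (hg : Fragment g x) (hh : Fragment h (x - g)) :
    Fragment (g + h) x := by
  have := frag_add (hg : |g| ⊓ |x - g| = 0) (frag_self g) hh
  rwa [add_sub_cancel] at this

lemma posPart_le_abs' (a : α) : a⁺ ≤ |a| := by
  rw [← posPart_add_negPart a]
  exact le_add_of_nonneg_right (negPart_nonneg a)

lemma negPart_le_abs' (a : α) : a⁻ ≤ |a| := by
  rw [← posPart_add_negPart a]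
  exact le_add_of_nonneg_left (posPart_nonneg a)

lemma frag_split_side {x y f : α} (hxy : |x| ⊓ |y| = 0) (hf : Fragment f (x + y)) :
    Fragment (f⁺ ⊓ |x| - f⁻ ⊓ |x|) x := by
  set a := f⁺ ⊓ |x| with ha_def
  set a' := f⁻ ⊓ |x| with ha'_def
  set b := f⁺ ⊓ |y| with hb_def
  set b' := f⁻ ⊓ |y| with hb'_def
  have ha0 : (0:α) ≤ a := le_inf (posPart_nonneg f) (abs_nonneg x)
  have ha'0 : (0:α) ≤ a' := le_inf (negPart_nonneg f) (abs_nonneg x)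
  have hb0 : (0:α) ≤ b := le_inf (posPart_nonneg f) (abs_nonneg y)
  have hb'0 : (0:α) ≤ b' := le_inf (negPart_nonneg f) (abs_nonneg y)
  have hfle : |f| ≤ |x| + |y| := by
    have h1 : |f| ≤ |x + y| := frag_abs_le hf
    rwa [abs_add_of_disj hxy] at h1
  have hsplit : ∀ c : α, 0 ≤ c → c ≤ |f| → c = c ⊓ |x| + c ⊓ |y| := by
    intro c hc0 hcf
    have hcle : c ≤ |x| + |y| := hcf.trans hfle
    have h1 : c ≤ c ⊓ |x| + c ⊓ |y| := by
      have := riesz hc0 (abs_nonneg x) (abs_nonneg y)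
      rwa [inf_eq_left.2 hcle] at this
    have hdisj : (c ⊓ |x|) ⊓ (c ⊓ |y|) = 0 :=
      disj_mono (le_inf hc0 (abs_nonneg x)) (le_inf hc0 (abs_nonneg y))
        inf_le_right inf_le_right hxy
    have h2 : c ⊓ |x| + c ⊓ |y| ≤ c := by
      have hsum : c ⊓ |x| + c ⊓ |y| = (c ⊓ |x|) ⊓ (c ⊓ |y|) + ((c ⊓ |x|) ⊔ (c ⊓ |y|)) :=
        (inf_add_sup _ _).symm
      rw [hsum, hdisj, zero_add]
      exact sup_le inf_le_left inf_le_left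
    exact le_antisymm h1 h2
  have hp : f⁺ = a + b := hsplit f⁺ (posPart_nonneg f) (posPart_le_abs' f)
  have hn : f⁻ = a' + b' := hsplit f⁻ (negPart_nonneg f) (negPart_le_abs' f)
  have hff : f = (a - a') + (b - b') := by
    have h := posPart_sub_negPart f
    rw [hp, hn] at h
    rw [← h]; abel
  have haa' : a ⊓ a' = 0 :=
    disj_mono ha0 ha'0 inf_le_left inf_le_left (posPart_inf_negPart_eq_zero f)
  have hbb' : b ⊓ b' = 0 :=
    disj_mono hb0 hb'0 inf_le_left inf_le_left (posPart_inf_negPart_eq_zero f)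
  have habs_gen : ∀ c c' : α, 0 ≤ c → 0 ≤ c' → c ⊓ c' = 0 → |c - c'| = c + c' := by
    intro c c' hc hc' hcc
    have : |c| ⊓ |(-c')| = 0 := by
      rwa [abs_neg, abs_of_nonneg hc, abs_of_nonneg hc']
    have h2 := abs_add_of_disj this
    rw [abs_neg, abs_of_nonneg hc, abs_of_nonneg hc'] at h2
    rw [sub_eq_add_neg]; exact h2
  have habs1 : |a - a'| = a + a' := habs_gen a a' ha0 ha'0 haa'
  have habs2 : |b - b'| = b + b' := habs_gen b b' hb0 hb'0 hbb'
  have hsup_eq : ∀ c c' : α, c ⊓ c' = 0 → c + c' = c ⊔ c' := by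
    intro c c' hcc
    have := inf_add_sup c c'
    rw [hcc, zero_add] at this
    exact this.symm
  have h1x : |a - a'| ≤ |x| := by
    rw [habs1, hsup_eq a a' haa']
    exact sup_le inf_le_right inf_le_right
  have h2y : |b - b'| ≤ |y| := by
    rw [habs2, hsup_eq b b' hbb']
    exact sup_le inf_le_right inf_le_right
  have h1f : |a - a'| ≤ |f| := by
    rw [habs1, ← posPart_add_negPart f]
    exact add_le_add inf_le_left inf_le_left
  have hcx : |x - (a - a')| ≤ 2 • |x| := by
    calc |x - (a - a')| = |x + (-(a - a'))| := by rw [sub_eq_add_neg]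
      _ ≤ |x| + |(-(a - a'))| := abs_add_le _ _
      _ = |x| + |a - a'| := by rw [abs_neg]
      _ ≤ |x| + |x| := add_le_add_right h1x _
      _ = 2 • |x| := (two_nsmul _).symm
  have hcy : |y - (b - b')| ≤ 2 • |y| := by
    calc |y - (b - b')| = |y + (-(b - b'))| := by rw [sub_eq_add_neg]
      _ ≤ |y| + |(-(b - b'))| := abs_add_le _ _
      _ = |y| + |b - b'| := by rw [abs_neg]
      _ ≤ |y| + |y| := add_le_add_right h2y _
      _ = 2 • |y| := (two_nsmul _).symm
  have hcd : |x - (a - a')| ⊓ |y - (b - b')| = 0 :=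
    disj_mono (abs_nonneg _) (abs_nonneg _) hcx hcy
      (disj_nsmul (abs_nonneg x) (abs_nonneg y) hxy 2 2)
  have hsum : x + y - f = (x - (a - a')) + (y - (b - b')) := by
    rw [hff]; abel
  have habs3 : |x + y - f| = |x - (a - a')| + |y - (b - b')| := by
    rw [hsum]; exact abs_add_of_disj hcd
  show |a - a'| ⊓ |x - (a - a')| = 0
  refine le_antisymm ?_ (le_inf (abs_nonneg _) (abs_nonneg _))
  calc |a - a'| ⊓ |x - (a - a')| ≤ |f| ⊓ |x + y - f| := by
        refine inf_le_inf h1f ?_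
        rw [habs3]
        exact le_add_of_nonneg_right (abs_nonneg _)
    _ = 0 := hf

lemma frag_split {x y f : α} (hxy : |x| ⊓ |y| = 0) (hf : Fragment f (x + y)) :
    ∃ f₁ f₂ : α, Fragment f₁ x ∧ Fragment f₂ y ∧ f = f₁ + f₂ := by
  refine ⟨f⁺ ⊓ |x| - f⁻ ⊓ |x|, f⁺ ⊓ |y| - f⁻ ⊓ |y|, frag_split_side hxy hf, ?_, ?_⟩
  · exact frag_split_side (by rwa [inf_comm]) (by rwa [add_comm])
  · -- f = f₁ + f₂
    have hfle : |f| ≤ |x| + |y| := by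
      have h1 : |f| ≤ |x + y| := frag_abs_le hf
      rwa [abs_add_of_disj hxy] at h1
    have hsplit : ∀ c : α, 0 ≤ c → c ≤ |f| → c = c ⊓ |x| + c ⊓ |y| := by
      intro c hc0 hcf
      have hcle : c ≤ |x| + |y| := hcf.trans hfle
      have h1 : c ≤ c ⊓ |x| + c ⊓ |y| := by
        have := riesz hc0 (abs_nonneg x) (abs_nonneg y)
        rwa [inf_eq_left.2 hcle] at this
      have hdisj : (c ⊓ |x|) ⊓ (c ⊓ |y|) = 0 :=
        disj_mono (le_inf hc0 (abs_nonneg x)) (le_inf hc0 (abs_nonneg y))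
          inf_le_right inf_le_right hxy
      have h2 : c ⊓ |x| + c ⊓ |y| ≤ c := by
        have hsum : c ⊓ |x| + c ⊓ |y| = (c ⊓ |x|) ⊓ (c ⊓ |y|) + ((c ⊓ |x|) ⊔ (c ⊓ |y|)) :=
          (inf_add_sup _ _).symm
        rw [hsum, hdisj, zero_add]
        exact sup_le inf_le_left inf_le_left
      exact le_antisymm h1 h2
    have hp : f⁺ = f⁺ ⊓ |x| + f⁺ ⊓ |y| := hsplit f⁺ (posPart_nonneg f) (posPart_le_abs' f)
    have hn : f⁻ = f⁻ ⊓ |x| + f⁻ ⊓ |y| := hsplit f⁻ (negPart_nonneg f) (negPart_le_abs' f)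
    have h := posPart_sub_negPart f
    rw [hp, hn] at h
    have h2 : f⁺ ⊓ |x| - f⁻ ⊓ |x| + (f⁺ ⊓ |y| - f⁻ ⊓ |y|)
        = f⁺ ⊓ |x| + f⁺ ⊓ |y| - (f⁻ ⊓ |x| + f⁻ ⊓ |y|) := by abel
    rw [h2, h]

end Frag

section Fside
variable {F : Type*} [ConditionallyCompleteLattice F] [AddCommGroup F]
  [CovariantClass F F (· + ·) (· ≤ ·)]

lemma arch {z w : F} (h : ∀ n : ℕ, n • z ≤ w) : z ≤ 0 := by
  have hbdd : BddAbove (Set.range fun n : ℕ => n • z) := ⟨w, by rintro v ⟨n, rfl⟩; exact h n⟩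
  set s := sSup (Set.range fun n : ℕ => n • z) with hs_def
  have hs : ∀ n : ℕ, n • z ≤ s := fun n => le_csSup hbdd ⟨n, rfl⟩
  have h2 : s ≤ s - z := by
    refine csSup_le (Set.range_nonempty _) ?_
    rintro v ⟨n, rfl⟩
    have h3 := hs (n + 1)
    rw [succ_nsmul] at h3
    exact le_sub_iff_add_le.2 h3
  have h4 : s + z ≤ s := by
    have := le_sub_iff_add_le.1 h2
    exact this
  exact (add_le_iff_nonpos_right s).1 h4

lemma csInf_add_eq {A B C : Set F} (hA : A.Nonempty) (hbA : BddBelow A)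
    (hB : B.Nonempty) (hbB : BddBelow B) (hC : C.Nonempty) (hbC : BddBelow C)
    (h1 : ∀ c ∈ C, ∃ a ∈ A, ∃ b ∈ B, c = a + b)
    (h2 : ∀ a ∈ A, ∀ b ∈ B, a + b ∈ C) : sInf C = sInf A + sInf B := by
  refine le_antisymm ?_ (le_csInf hC ?_)
  · have hb : ∀ b ∈ B, sInf C - sInf A ≤ b := by
      intro b hbmem
      have ha : ∀ a ∈ A, sInf C - b ≤ a := by
        intro a hamem
        rw [sub_le_iff_le_add]
        exact csInf_le hbC (h2 a hamem b hbmem)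
      have h3 : sInf C - b ≤ sInf A := le_csInf hA ha
      have h4 : sInf C ≤ sInf A + b := by
        have h6 := sub_le_iff_le_add.1 h3
        exact h6
      rw [sub_le_iff_le_add, add_comm]
      exact h4
    have h5 : sInf C - sInf A ≤ sInf B := le_csInf hB hb
    have := sub_le_iff_le_add.1 h5
    rwa [add_comm] at this
  · intro c hc
    obtain ⟨a, ha, b, hb, rfl⟩ := h1 c hc
    exact add_le_add (csInf_le hbA ha) (csInf_le hbB hb)

lemma add_csSup_le {A B : Set F} {c : F} (hA : A.Nonempty) (hB : B.Nonempty)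
    (h : ∀ a ∈ A, ∀ b ∈ B, a + b ≤ c) : sSup A + sSup B ≤ c := by
  have h1 : ∀ a ∈ A, a ≤ c - sSup B := by
    intro a ha
    have h2 : sSup B ≤ c - a := by
      refine csSup_le hB ?_
      intro b hb
      rw [le_sub_iff_add_le, add_comm]
      exact h a ha b hb
    rw [le_sub_iff_add_le, add_comm]
    exact le_sub_iff_add_le.1 h2
  have h3 : sSup A ≤ c - sSup B := csSup_le hA h1
  have := le_sub_iff_add_le.1 h3
  exact this

end Fside

section Smul
variable {F : Type*} [Lattice F] [AddCommGroup F]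
  [CovariantClass F F (· + ·) (· ≤ ·)] [Module ℝ F] [PosSMulMono ℝ F]

lemma smul_nonneg' {c : ℝ} {b : F} (hc : 0 ≤ c) (hb : 0 ≤ b) : 0 ≤ c • b := by
  have := smul_le_smul_of_nonneg_left hb hc
  simpa using this

lemma smul_mono_scalar {c d : ℝ} {b : F} (hcd : c ≤ d) (hb : 0 ≤ b) : c • b ≤ d • b := by
  have h : (0:F) ≤ (d - c) • b := smul_nonneg' (by linarith) hb
  rw [sub_smul] at h
  exact sub_nonneg.1 h

lemma disj_smul_real {a b : F} {c : ℝ} (ha : 0 ≤ a) (hb : 0 ≤ b) (h : a ⊓ b = 0)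
    (hc : 0 ≤ c) : a ⊓ (c • b) = 0 := by
  have h1 : c • b ≤ (⌈c⌉₊ : ℕ) • b := by
    have h2 : c • b ≤ ((⌈c⌉₊ : ℝ)) • b := smul_mono_scalar (Nat.le_ceil c) hb
    rwa [Nat.cast_smul_eq_nsmul] at h2
  have h3 : a ⊓ (c • b) ≤ a ⊓ ((⌈c⌉₊ : ℕ) • b) := inf_le_inf_left _ h1
  rw [disj_nsmul_right ha hb h ⌈c⌉₊] at h3
  exact le_antisymm h3 (le_inf ha (smul_nonneg' hc hb))

end Smul

section BandProj
variable {F : Type*} [Lattice F] [AddCommGroup F] [CovariantClass F F (· + ·) (· ≤ ·)]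
variable {ρ : F → F}

lemma bp_zero (hρ : IsBandProj ρ) : ρ 0 = 0 := by
  have h := (hρ.1 0 0).symm
  rw [add_zero] at h
  rwa [add_eq_left] at h

lemma bp_sub (hρ : IsBandProj ρ) (x y : F) : ρ (x - y) = ρ x - ρ y := by
  have h := hρ.1 (x - y) y
  rw [sub_add_cancel] at h
  rw [eq_sub_iff_add_eq, ← h]

lemma bp_mono (hρ : IsBandProj ρ) {x y : F} (h : x ≤ y) : ρ x ≤ ρ y := by
  have h1 : 0 ≤ ρ (y - x) := (hρ.2.2 (y - x) (sub_nonneg.2 h)).1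
  rw [bp_sub hρ] at h1
  exact sub_nonneg.1 h1

lemma bp_le_self (hρ : IsBandProj ρ) {x : F} (hx : 0 ≤ x) : ρ x ≤ x := (hρ.2.2 x hx).2

lemma bp_nonneg (hρ : IsBandProj ρ) {x : F} (hx : 0 ≤ x) : 0 ≤ ρ x := (hρ.2.2 x hx).1

lemma bp_perp_zero (hρ : IsBandProj ρ) (x : F) : ρ (x - ρ x) = 0 := by
  rw [bp_sub hρ, hρ.2.1, sub_self]

lemma bp_fix_of_le (hρ : IsBandProj ρ) {z w : F} (hz : 0 ≤ z) (hzw : z ≤ w)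
    (hw : ρ w = w) : ρ z = z := by
  have h1 : 0 ≤ z - ρ z := sub_nonneg.2 (bp_le_self hρ hz)
  have h2 : 0 ≤ (w - z) - ρ (w - z) :=
    sub_nonneg.2 (bp_le_self hρ (sub_nonneg.2 hzw))
  rw [bp_sub hρ] at h2
  have h3 : z - ρ z ≤ w - ρ w := by
    have : (w - ρ w) - (z - ρ z) = (w - z) - (ρ w - ρ z) := by abel
    rw [← sub_nonneg, this]
    exact h2
  rw [hw, sub_self] at h3
  have h4 : z - ρ z = 0 := le_antisymm h3 h1
  rw [sub_eq_zero] at h4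
  exact h4.symm

end BandProj

section Ops
variable {E Fc : Type*} [Lattice E] [AddCommGroup E] [CovariantClass E E (· + ·) (· ≤ ·)]
variable [Lattice Fc] [AddCommGroup Fc] [CovariantClass Fc Fc (· + ·) (· ≤ ·)]

lemma orth_zero {T : E → Fc} (hT : OrthAdd T) : T 0 = 0 := by
  have h := (hT 0 0 (by simp)).symm
  rw [add_zero] at h
  rwa [add_eq_left] at h

lemma orth_frag {T : E → Fc} (hT : OrthAdd T) {f x : E} (hf : Fragment f x) :
    T x = T f + T (x - f) := by
  have h := hT f (x - f) hf
  rwa [add_sub_cancel] at h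

lemma orth_frag_le {T : E → Fc} (hT : OrthAdd T) (hTpos : ∀ y, 0 ≤ T y)
    {f x : E} (hf : Fragment f x) : T f ≤ T x := by
  rw [orth_frag hT hf]
  exact le_add_of_nonneg_right (hTpos _)

lemma obm_squeeze {G H : E → Fc} (hG0 : ∀ x, 0 ≤ G x) (hGH : ∀ x, G x ≤ H x)
    (hH : OrderBoundedMap H) : OrderBoundedMap G := by
  intro a b
  obtain ⟨c, d, hcd⟩ := hH a b
  exact ⟨0, d, fun x hx => ⟨hG0 x, (hGH x).trans (hcd x hx).2⟩⟩

lemma obm_sub {G H : E → Fc} (hG : OrderBoundedMap G) (hH : OrderBoundedMap H) :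
    OrderBoundedMap (fun x => G x - H x) := by
  intro a b
  obtain ⟨c₁, d₁, h₁⟩ := hG a b
  obtain ⟨c₂, d₂, h₂⟩ := hH a b
  refine ⟨c₁ - d₂, d₁ - c₂, fun x hx => ⟨?_, ?_⟩⟩
  · exact sub_le_sub (h₁ x hx).1 (h₂ x hx).2
  · exact sub_le_sub (h₁ x hx).2 (h₂ x hx).1

end Ops

section BJV
variable {E F : Type*} [Lattice E] [AddCommGroup E] [CovariantClass E E (· + ·) (· ≤ ·)]
variable [ConditionallyCompleteLattice F] [AddCommGroup F]
  [CovariantClass F F (· + ·) (· ≤ ·)]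

/-- `sup { G g : g ⊑ x, φ g ≤ δ }`. -/
def bop (φ : E → ℝ) (G : E → F) (δ : ℝ) (x : E) : F :=
  sSup {w | ∃ g, Fragment g x ∧ φ g ≤ δ ∧ w = G g}

/-- `inf_{δ > 0} bop φ G δ x`. -/
def Jop (φ : E → ℝ) (G : E → F) (x : E) : F :=
  sInf {v | ∃ δ : ℝ, 0 < δ ∧ v = bop φ G δ x}

/-- `inf { R f + S (x - f) : f ⊑ x }`. -/
def Vlow (R S : E → F) (x : E) : F :=
  sInf {v | ∃ f, Fragment f x ∧ v = R f + S (x - f)}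

variable {φ : E → ℝ} {G : E → F}

lemma bop_set_nonempty (hφ : OrthAdd φ) {δ : ℝ} (hδ : 0 ≤ δ) (x : E) :
    {w | ∃ g, Fragment g x ∧ φ g ≤ δ ∧ w = G g}.Nonempty :=
  ⟨G 0, 0, frag_zero x, by rw [orth_zero hφ]; exact hδ, rfl⟩

lemma bop_bddAbove (hG : OrthAdd G) (hGpos : ∀ y, 0 ≤ G y) (δ : ℝ) (x : E) :
    BddAbove {w | ∃ g, Fragment g x ∧ φ g ≤ δ ∧ w = G g} := by
  refine ⟨G x, ?_⟩
  rintro w ⟨g, hg, _, rfl⟩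
  exact orth_frag_le hG hGpos hg

lemma bop_nonneg (hφ : OrthAdd φ) (hG : OrthAdd G) (hGpos : ∀ y, 0 ≤ G y)
    {δ : ℝ} (hδ : 0 ≤ δ) (x : E) : 0 ≤ bop φ G δ x := by
  have h := le_csSup (bop_bddAbove hG hGpos δ x)
    (⟨0, frag_zero x, by rw [orth_zero hφ]; exact hδ, rfl⟩ :
      G 0 ∈ {w | ∃ g, Fragment g x ∧ φ g ≤ δ ∧ w = G g})
  rwa [orth_zero hG] at h

lemma bop_le_G (hφ : OrthAdd φ) (hG : OrthAdd G) (hGpos : ∀ y, 0 ≤ G y)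
    {δ : ℝ} (hδ : 0 ≤ δ) (x : E) : bop φ G δ x ≤ G x := by
  refine csSup_le (bop_set_nonempty hφ hδ x) ?_
  rintro w ⟨g, hg, _, rfl⟩
  exact orth_frag_le hG hGpos hg

lemma bop_mono (hφ : OrthAdd φ) (hG : OrthAdd G) (hGpos : ∀ y, 0 ≤ G y)
    {δ δ' : ℝ} (hδ : 0 ≤ δ) (hδδ' : δ ≤ δ') (x : E) : bop φ G δ x ≤ bop φ G δ' x := by
  refine csSup_le (bop_set_nonempty hφ hδ x) ?_
  rintro w ⟨g, hg, hφg, rfl⟩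
  exact le_csSup (bop_bddAbove hG hGpos δ' x) ⟨g, hg, hφg.trans hδδ', rfl⟩

lemma Jop_set_nonempty (x : E) :
    {v | ∃ δ : ℝ, 0 < δ ∧ v = bop φ G δ x}.Nonempty := ⟨bop φ G 1 x, 1, one_pos, rfl⟩

lemma Jop_bddBelow (hφ : OrthAdd φ) (hG : OrthAdd G) (hGpos : ∀ y, 0 ≤ G y) (x : E) :
    BddBelow {v | ∃ δ : ℝ, 0 < δ ∧ v = bop φ G δ x} := by
  refine ⟨0, ?_⟩
  rintro v ⟨δ, hδ, rfl⟩
  exact bop_nonneg hφ hG hGpos hδ.le x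

lemma Jop_nonneg (hφ : OrthAdd φ) (hG : OrthAdd G) (hGpos : ∀ y, 0 ≤ G y) (x : E) :
    0 ≤ Jop φ G x := by
  refine le_csInf (Jop_set_nonempty x) ?_
  rintro v ⟨δ, hδ, rfl⟩
  exact bop_nonneg hφ hG hGpos hδ.le x

lemma Jop_le_bop (hφ : OrthAdd φ) (hG : OrthAdd G) (hGpos : ∀ y, 0 ≤ G y)
    {δ : ℝ} (hδ : 0 < δ) (x : E) : Jop φ G x ≤ bop φ G δ x :=
  csInf_le (Jop_bddBelow hφ hG hGpos x) ⟨δ, hδ, rfl⟩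

lemma Jop_le_G (hφ : OrthAdd φ) (hG : OrthAdd G) (hGpos : ∀ y, 0 ≤ G y) (x : E) :
    Jop φ G x ≤ G x :=
  (Jop_le_bop hφ hG hGpos one_pos x).trans (bop_le_G hφ hG hGpos zero_le_one x)

lemma Jop_orthadd (hφ : OrthAdd φ) (hφpos : ∀ y, 0 ≤ φ y)
    (hG : OrthAdd G) (hGpos : ∀ y, 0 ≤ G y) : OrthAdd (Jop φ G) := by
  intro x y hxy
  have hsuper : ∀ δ : ℝ, 0 < δ → bop φ G (δ/2) x + bop φ G (δ/2) y ≤ bop φ G δ (x + y) := by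
    intro δ hδ
    refine add_csSup_le (bop_set_nonempty hφ (by linarith) x)
      (bop_set_nonempty hφ (by linarith) y) ?_
    rintro a ⟨g₁, hg₁, hφ₁, rfl⟩ b ⟨g₂, hg₂, hφ₂, rfl⟩
    have hdisj : |g₁| ⊓ |g₂| = 0 := frag_disj hxy hg₁ hg₂
    have hGsum : G g₁ + G g₂ = G (g₁ + g₂) := (hG g₁ g₂ hdisj).symm
    rw [hGsum]
    refine le_csSup (bop_bddAbove hG hGpos δ (x + y)) ⟨g₁ + g₂, frag_add hxy hg₁ hg₂, ?_, rfl⟩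
    rw [hφ g₁ g₂ hdisj]
    linarith
  have hsub : ∀ δ : ℝ, 0 < δ → bop φ G δ (x + y) ≤ bop φ G δ x + bop φ G δ y := by
    intro δ hδ
    refine csSup_le (bop_set_nonempty hφ hδ.le (x + y)) ?_
    rintro w ⟨g, hg, hφg, rfl⟩
    obtain ⟨g₁, g₂, hg₁, hg₂, rfl⟩ := frag_split hxy hg
    have hdisj : |g₁| ⊓ |g₂| = 0 := frag_disj hxy hg₁ hg₂
    have hφsum := hφ g₁ g₂ hdisj
    have hφ₁ : φ g₁ ≤ δ := by have := hφpos g₂; linarith [hφg, hφsum.symm ▸ hφg]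
    have hφ₂ : φ g₂ ≤ δ := by have := hφpos g₁; linarith [hφsum.symm ▸ hφg]
    rw [hG g₁ g₂ hdisj]
    exact add_le_add (le_csSup (bop_bddAbove hG hGpos δ x) ⟨g₁, hg₁, hφ₁, rfl⟩)
      (le_csSup (bop_bddAbove hG hGpos δ y) ⟨g₂, hg₂, hφ₂, rfl⟩)
  refine le_antisymm ?_ ?_
  · -- J(x+y) ≤ J x + J y
    have key : ∀ δ δ' : ℝ, 0 < δ → 0 < δ' →
        Jop φ G (x + y) ≤ bop φ G δ x + bop φ G δ' y := by
      intro δ δ' hδ hδ'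
      have hμ : (0:ℝ) < min δ δ' := lt_min hδ hδ'
      calc Jop φ G (x + y) ≤ bop φ G (min δ δ') (x + y) := Jop_le_bop hφ hG hGpos hμ _
        _ ≤ bop φ G (min δ δ') x + bop φ G (min δ δ') y := hsub _ hμ
        _ ≤ bop φ G δ x + bop φ G δ' y :=
            add_le_add (bop_mono hφ hG hGpos hμ.le (min_le_left _ _) x)
              (bop_mono hφ hG hGpos hμ.le (min_le_right _ _) y)
    have step1 : ∀ δ' : ℝ, 0 < δ' → Jop φ G (x + y) - bop φ G δ' y ≤ Jop φ G x := by
      intro δ' hδ'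
      refine le_csInf (Jop_set_nonempty x) ?_
      rintro v ⟨δ, hδ, rfl⟩
      rw [sub_le_iff_le_add]
      exact key δ δ' hδ hδ'
    have step2 : Jop φ G (x + y) - Jop φ G x ≤ Jop φ G y := by
      refine le_csInf (Jop_set_nonempty y) ?_
      rintro v ⟨δ', hδ', rfl⟩
      have h2 : Jop φ G (x + y) ≤ Jop φ G x + bop φ G δ' y :=
        sub_le_iff_le_add.1 (step1 δ' hδ')
      exact sub_le_iff_le_add.2 (h2.trans_eq (add_comm _ _))
    exact (sub_le_iff_le_add.1 step2).trans_eq (add_comm _ _)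
  · -- J x + J y ≤ J (x+y)
    refine le_csInf (Jop_set_nonempty (x + y)) ?_
    rintro v ⟨δ, hδ, rfl⟩
    have h1 : Jop φ G x ≤ bop φ G (δ/2) x := Jop_le_bop hφ hG hGpos (by linarith) x
    have h2 : Jop φ G y ≤ bop φ G (δ/2) y := Jop_le_bop hφ hG hGpos (by linarith) y
    exact (add_le_add h1 h2).trans (hsuper δ hδ)

end BJV

section VlowSec
variable {E F : Type*} [Lattice E] [AddCommGroup E] [CovariantClass E E (· + ·) (· ≤ ·)]
variable [ConditionallyCompleteLattice F] [AddCommGroup F]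
  [CovariantClass F F (· + ·) (· ≤ ·)]
variable {R S : E → F}

lemma Vlow_set_nonempty (R S : E → F) (x : E) :
    {v | ∃ f, Fragment f x ∧ v = R f + S (x - f)}.Nonempty :=
  ⟨R 0 + S (x - 0), 0, frag_zero x, rfl⟩

lemma Vlow_bddBelow (hRpos : ∀ y, 0 ≤ R y) (hSpos : ∀ y, 0 ≤ S y) (x : E) :
    BddBelow {v | ∃ f, Fragment f x ∧ v = R f + S (x - f)} := by
  refine ⟨0, ?_⟩
  rintro v ⟨f, hf, rfl⟩
  exact add_nonneg (hRpos f) (hSpos (x - f))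

lemma Vlow_nonneg (hRpos : ∀ y, 0 ≤ R y) (hSpos : ∀ y, 0 ≤ S y) (x : E) :
    0 ≤ Vlow R S x := by
  refine le_csInf (Vlow_set_nonempty R S x) ?_
  rintro v ⟨f, hf, rfl⟩
  exact add_nonneg (hRpos f) (hSpos (x - f))

lemma Vlow_le_R (hRpos : ∀ y, 0 ≤ R y) (hSpos : ∀ y, 0 ≤ S y) (hS0 : S 0 = 0) (x : E) :
    Vlow R S x ≤ R x := by
  have hmem : R x + S (x - x) ∈ {v | ∃ f, Fragment f x ∧ v = R f + S (x - f)} :=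
    ⟨x, frag_self x, rfl⟩
  have h := csInf_le (Vlow_bddBelow hRpos hSpos x) hmem
  rwa [sub_self, hS0, add_zero] at h

lemma Vlow_le_S (hRpos : ∀ y, 0 ≤ R y) (hSpos : ∀ y, 0 ≤ S y) (hR0 : R 0 = 0) (x : E) :
    Vlow R S x ≤ S x := by
  have hmem : R 0 + S (x - 0) ∈ {v | ∃ f, Fragment f x ∧ v = R f + S (x - f)} :=
    ⟨0, frag_zero x, rfl⟩
  have h := csInf_le (Vlow_bddBelow hRpos hSpos x) hmem
  rwa [sub_zero, hR0, zero_add] at h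

lemma Vlow_orthadd (hRa : OrthAdd R) (hSa : OrthAdd S)
    (hRpos : ∀ y, 0 ≤ R y) (hSpos : ∀ y, 0 ≤ S y) : OrthAdd (Vlow R S) := by
  intro x y hxy
  refine csInf_add_eq (Vlow_set_nonempty R S x) (Vlow_bddBelow hRpos hSpos x)
    (Vlow_set_nonempty R S y) (Vlow_bddBelow hRpos hSpos y)
    (Vlow_set_nonempty R S (x + y)) (Vlow_bddBelow hRpos hSpos (x + y)) ?_ ?_
  · rintro c ⟨f, hf, rfl⟩
    obtain ⟨f₁, f₂, hf₁, hf₂, rfl⟩ := frag_split hxy hf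
    refine ⟨R f₁ + S (x - f₁), ⟨f₁, hf₁, rfl⟩, R f₂ + S (y - f₂), ⟨f₂, hf₂, rfl⟩, ?_⟩
    have hR12 : R (f₁ + f₂) = R f₁ + R f₂ := hRa f₁ f₂ (frag_disj hxy hf₁ hf₂)
    have hcompl : x + y - (f₁ + f₂) = (x - f₁) + (y - f₂) := by abel
    have hS12 : S (x + y - (f₁ + f₂)) = S (x - f₁) + S (y - f₂) := by
      rw [hcompl]; exact hSa _ _ (frag_compl_disj hxy hf₁ hf₂)
    rw [hR12, hS12]; abel
  · rintro a ⟨f₁, hf₁, rfl⟩ b ⟨f₂, hf₂, rfl⟩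
    refine ⟨f₁ + f₂, frag_add hxy hf₁ hf₂, ?_⟩
    have hR12 : R (f₁ + f₂) = R f₁ + R f₂ := hRa f₁ f₂ (frag_disj hxy hf₁ hf₂)
    have hcompl : x + y - (f₁ + f₂) = (x - f₁) + (y - f₂) := by abel
    have hS12 : S (x + y - (f₁ + f₂)) = S (x - f₁) + S (y - f₂) := by
      rw [hcompl]; exact hSa _ _ (frag_compl_disj hxy hf₁ hf₂)
    rw [hR12, hS12]; abel

end VlowSec

end St9


/-- Formula for `σ_S T` where `S = φ ⊗ u` is the one-dimensional positive abstract Uryson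
operator `e ↦ φ(e) • u` (`φ : E → ℝ` a positive abstract Uryson functional, `u ∈ F₊`).
Here `ρu` is the band projection onto `{u}^⊥⊥` and `R` plays the role of `σ_S T`:
a positive Uryson operator with `R ≤ T`, disjoint from `S`, and such that `T - R` lies in
the band `{S}^⊥⊥`. Then
`R e = ρu^⊥ (T e) + inf_{ε>0} sup { ρu (T f) : φ f ≤ ε φ e, f ⊑ e }`. -/
theorem stmt9 {E F : Type} [Lattice E] [AddCommGroup E]
    [CovariantClass E E (· + ·) (· ≤ ·)] [Module ℝ E]
    [ConditionallyCompleteLattice F] [AddCommGroup F]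
    [CovariantClass F F (· + ·) (· ≤ ·)] [Module ℝ F] [PosSMulMono ℝ F]
    (φ : E → ℝ) (hφ : Uryson φ) (hφpos : ∀ x, 0 ≤ φ x)
    (u : F) (hu : 0 ≤ u)
    (S : E → F) (hSdef : ∀ e, S e = φ e • u)
    (ρu : F → F) (hρu : IsBandProj ρu)
    (hρuband : ∀ x : F, 0 ≤ x → (ρu x = 0 ↔ x ⊓ u = 0))
    (T : E → F) (hT : Uryson T) (hTpos : ∀ x, 0 ≤ T x)
    (R : E → F) (hR : Uryson R) (hRpos : ∀ x, 0 ≤ R x) (hRT : ∀ x, R x ≤ T x)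
    (hRperp : UDisjointPos R S)
    (hband : ∀ U : E → F, Uryson U → (∀ x, 0 ≤ U x) →
      UDisjointPos U S → UDisjointPos (fun x => T x - R x) U) :
    ∀ e : E,
      R e = (T e - ρu (T e)) +
        sInf {v : F | ∃ ε : ℝ, 0 < ε ∧
          v = sSup {w : F | ∃ f : E, Fragment f e ∧ φ f ≤ ε * φ e ∧ w = ρu (T f)}} := by
  intro e
  obtain ⟨hφa, hφb⟩ := hφ
  obtain ⟨hTa, hTb⟩ := hT
  obtain ⟨hRa, hRb⟩ := hR
  have hρadd : ∀ x y : F, ρu (x + y) = ρu x + ρu y := hρu.1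
  have hρidem : ∀ x, ρu (ρu x) = ρu x := hρu.2.1
  have hφ0 : φ 0 = 0 := St9.orth_zero hφa
  have hR0 : R 0 = 0 := St9.orth_zero hRa
  have hS0 : S 0 = 0 := by rw [hSdef, hφ0, zero_smul]
  have hSpos : ∀ x, 0 ≤ S x := fun x => by
    rw [hSdef]; exact St9.smul_nonneg' (hφpos x) hu
  have hSa : OrthAdd S := by
    intro a b hab
    simp only [hSdef]
    rw [hφa a b hab, add_smul]
  have hGa : OrthAdd (fun y => ρu (T y)) := by
    intro a b hab
    show ρu (T (a + b)) = ρu (T a) + ρu (T b)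
    rw [hTa a b hab, hρadd]
  have hGpos : ∀ y : E, (0:F) ≤ ρu (T y) := fun y => St9.bp_nonneg hρu (hTpos y)
  -- Claim A : the band part of T - R is everything
  have hDpos : ∀ x, (0:F) ≤ T x - R x := fun x => sub_nonneg.2 (hRT x)
  have hU1a : OrthAdd (fun x => (T x - R x) - ρu (T x - R x)) := by
    intro a b hab
    show (T (a+b) - R (a+b)) - ρu (T (a+b) - R (a+b))
        = ((T a - R a) - ρu (T a - R a)) + ((T b - R b) - ρu (T b - R b))
    have h1 : T (a+b) - R (a+b) = (T a - R a) + (T b - R b) := by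
      rw [hTa a b hab, hRa a b hab]; abel
    rw [h1, hρadd]; abel
  have hU1pos : ∀ x, (0:F) ≤ (T x - R x) - ρu (T x - R x) := fun x =>
    sub_nonneg.2 (St9.bp_le_self hρu (hDpos x))
  have hU1b : OrderBoundedMap (fun x => (T x - R x) - ρu (T x - R x)) :=
    St9.obm_squeeze hU1pos
      (fun x => le_trans (sub_le_self _ (St9.bp_nonneg hρu (hDpos x)))
        (sub_le_self (T x) (hRpos x))) hTb
  have hU1S : UDisjointPos (fun x => (T x - R x) - ρu (T x - R x)) S := by
    intro V hV hVU hVS xx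
    have ha : (0:F) ≤ (T xx - R xx) - ρu (T xx - R xx) := hU1pos xx
    have hρa : ρu ((T xx - R xx) - ρu (T xx - R xx)) = 0 := St9.bp_perp_zero hρu _
    have hau := (hρuband _ ha).1 hρa
    have hasu : ((T xx - R xx) - ρu (T xx - R xx)) ⊓ S xx = 0 := by
      rw [hSdef]
      exact St9.disj_smul_real ha hu hau (hφpos xx)
    calc V xx ≤ ((T xx - R xx) - ρu (T xx - R xx)) ⊓ S xx := le_inf (hVU xx) (hVS xx)
      _ = 0 := hasu
  have hU1z : ∀ x, (T x - R x) - ρu (T x - R x) = 0 := by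
    intro x
    have h := hband _ ⟨hU1a, hU1b⟩ hU1pos hU1S _ ⟨hU1a, hU1b⟩
      (fun y => sub_le_self _ (St9.bp_nonneg hρu (hDpos y))) (fun y => le_rfl) x
    exact le_antisymm h (hU1pos x)
  have hClaimA : ∀ x, T x - ρu (T x) = R x - ρu (R x) := by
    intro x
    have h := hU1z x
    have h2 : T x - R x = ρu (T x) - ρu (R x) := by
      have h3 := sub_eq_zero.1 h
      rwa [St9.bp_sub hρu] at h3
    have h5 : T x - ρu (T x) - (R x - ρu (R x)) = (T x - R x) - (ρu (T x) - ρu (R x)) := by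
      abel
    have h6 : T x - ρu (T x) - (R x - ρu (R x)) = 0 := by rw [h5, h2, sub_self]
    exact sub_eq_zero.1 h6
  -- Vlow is zero since R ⊥ S
  have hVa : OrthAdd (St9.Vlow R S) := St9.Vlow_orthadd hRa hSa hRpos hSpos
  have hVb : OrderBoundedMap (St9.Vlow R S) :=
    St9.obm_squeeze (St9.Vlow_nonneg hRpos hSpos) (St9.Vlow_le_R hRpos hSpos hS0) hRb
  have hVlow0 : ∀ x, St9.Vlow R S x = 0 := by
    intro x
    have h := hRperp (St9.Vlow R S) ⟨hVa, hVb⟩ (St9.Vlow_le_R hRpos hSpos hS0)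
      (St9.Vlow_le_S hRpos hSpos hR0) x
    exact le_antisymm h (St9.Vlow_nonneg hRpos hSpos x)
  -- Step B1 : ρu (R e) ≤ bop (ε * φ e)
  have hB1 : ∀ ε : ℝ, 0 < ε → ρu (R e) ≤ St9.bop φ (fun y => ρu (T y)) (ε * φ e) e := by
    intro ε hε
    rcases (hφpos e).eq_or_lt with h0 | hpos
    · have hmem : ρu (T e) ∈
          {w : F | ∃ g, Fragment g e ∧ φ g ≤ ε * φ e ∧ w = ρu (T g)} :=
        ⟨e, St9.frag_self e, le_of_eq (by rw [← h0, mul_zero]), rfl⟩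
      have h1 := le_csSup (St9.bop_bddAbove hGa hGpos (ε * φ e) e) hmem
      exact (St9.bp_mono hρu (hRT e)).trans h1
    · have hc : (0:ℝ) < ε * φ e := mul_pos hε hpos
      obtain ⟨M, hM⟩ : ∃ M' : F, M' = St9.bop φ (fun y => ρu (T y)) (ε * φ e) e := ⟨_, rfl⟩
      rw [← hM]
      have hM0 : 0 ≤ M := by rw [hM]; exact St9.bop_nonneg hφa hGa hGpos hc.le e
      have hlb : ∀ v ∈ {v : F | ∃ f, Fragment f e ∧ v = R f + S (e - f)},
          (ρu (R e) - M) ⊓ ((ε * φ e) • u) ≤ v := by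
        rintro v ⟨f, hf, rfl⟩
        by_cases hcase : φ (e - f) ≤ ε * φ e
        · have hmem2 : ρu (T (e - f)) ∈
              {w : F | ∃ g, Fragment g e ∧ φ g ≤ ε * φ e ∧ w = ρu (T g)} :=
            ⟨e - f, St9.frag_compl hf, hcase, rfl⟩
          have hTef : ρu (T (e - f)) ≤ St9.bop φ (fun y => ρu (T y)) (ε * φ e) e :=
            le_csSup (St9.bop_bddAbove hGa hGpos (ε * φ e) e) hmem2
          rw [← hM] at hTef
          have hRe2 : ρu (R e) ≤ R f + M := by
            have h1 : R e = R f + R (e - f) := St9.orth_frag hRa hf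
            calc ρu (R e) = ρu (R f) + ρu (R (e - f)) := by rw [h1, hρadd]
              _ ≤ R f + ρu (T (e - f)) :=
                  add_le_add (St9.bp_le_self hρu (hRpos f)) (St9.bp_mono hρu (hRT (e - f)))
              _ ≤ R f + M := add_le_add_right hTef _
          have h2 : ρu (R e) - M ≤ R f := sub_le_iff_le_add.2 hRe2
          exact inf_le_left.trans (h2.trans (le_add_of_nonneg_right (hSpos (e - f))))
        · push_neg at hcase
          have h2 : (ε * φ e) • u ≤ S (e - f) := by
            rw [hSdef]
            exact St9.smul_mono_scalar hcase.le hu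
          exact inf_le_right.trans (h2.trans (le_add_of_nonneg_left (hRpos f)))
      have h3 : (ρu (R e) - M) ⊓ ((ε * φ e) • u) ≤ 0 := by
        have h4 : (ρu (R e) - M) ⊓ ((ε * φ e) • u) ≤ St9.Vlow R S e :=
          le_csInf (St9.Vlow_set_nonempty R S e) hlb
        rwa [hVlow0 e] at h4
      have hp1 : (ρu (R e) - M)⁺ ⊓ ((ε * φ e) • u) - (ρu (R e) - M)⁻
          ≤ (ρu (R e) - M) ⊓ ((ε * φ e) • u) := by
        refine le_inf ?_ ?_
        · have h6 := sub_le_sub_right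
            (inf_le_left : (ρu (R e) - M)⁺ ⊓ ((ε * φ e) • u) ≤ (ρu (R e) - M)⁺)
            ((ρu (R e) - M)⁻)
          calc (ρu (R e) - M)⁺ ⊓ ((ε * φ e) • u) - (ρu (R e) - M)⁻
              ≤ (ρu (R e) - M)⁺ - (ρu (R e) - M)⁻ := h6
            _ = ρu (R e) - M := posPart_sub_negPart _
        · calc (ρu (R e) - M)⁺ ⊓ ((ε * φ e) • u) - (ρu (R e) - M)⁻
              ≤ (ρu (R e) - M)⁺ ⊓ ((ε * φ e) • u) := sub_le_self _ (negPart_nonneg _)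
            _ ≤ (ε * φ e) • u := inf_le_right
      have hp2 : (ρu (R e) - M)⁺ ⊓ ((ε * φ e) • u) ≤ (ρu (R e) - M)⁻ :=
        sub_nonpos.1 (hp1.trans h3)
      have hp0 : (ρu (R e) - M)⁺ ⊓ ((ε * φ e) • u) = 0 := by
        refine le_antisymm ?_ (le_inf (posPart_nonneg _) (St9.smul_nonneg' hc.le hu))
        calc (ρu (R e) - M)⁺ ⊓ ((ε * φ e) • u)
            ≤ (ρu (R e) - M)⁺ ⊓ (ρu (R e) - M)⁻ := le_inf inf_le_left hp2
          _ = 0 := posPart_inf_negPart_eq_zero _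
      have hpu : (ρu (R e) - M)⁺ ⊓ u = 0 := by
        have h6 : (ρu (R e) - M)⁺ ⊓ ((1 / (ε * φ e)) • ((ε * φ e) • u)) = 0 :=
          St9.disj_smul_real (posPart_nonneg _) (St9.smul_nonneg' hc.le hu) hp0
            (by positivity)
        rwa [smul_smul, one_div_mul_cancel hc.ne', one_smul] at h6
      have hpρ : ρu ((ρu (R e) - M)⁺) = 0 := (hρuband _ (posPart_nonneg _)).2 hpu
      have hple : (ρu (R e) - M)⁺ ≤ ρu (R e) := by
        rw [posPart_def]
        exact sup_le (sub_le_self _ hM0) (St9.bp_nonneg hρu (hRpos e))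
      have hfix : ρu ((ρu (R e) - M)⁺) = (ρu (R e) - M)⁺ :=
        St9.bp_fix_of_le hρu (posPart_nonneg _) hple (hρidem (R e))
      have hzero : (ρu (R e) - M)⁺ = 0 := by rw [← hfix, hpρ]
      have h7 : ρu (R e) - M ≤ 0 := (le_posPart _).trans hzero.le
      exact sub_nonpos.1 h7
  -- the operator QJ = (T - ρT) + J
  have hJa : OrthAdd (St9.Jop φ (fun y => ρu (T y))) := St9.Jop_orthadd hφa hφpos hGa hGpos
  have hQJa : OrthAdd (fun x => (T x - ρu (T x)) + St9.Jop φ (fun y => ρu (T y)) x) := by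
    intro a b hab
    show (T (a+b) - ρu (T (a+b))) + St9.Jop φ (fun y => ρu (T y)) (a+b)
        = ((T a - ρu (T a)) + St9.Jop φ (fun y => ρu (T y)) a)
          + ((T b - ρu (T b)) + St9.Jop φ (fun y => ρu (T y)) b)
    rw [hTa a b hab, hρadd, hJa a b hab]; abel
  have hQJpos : ∀ x, (0:F) ≤ (T x - ρu (T x)) + St9.Jop φ (fun y => ρu (T y)) x := fun x =>
    add_nonneg (sub_nonneg.2 (St9.bp_le_self hρu (hTpos x)))
      (St9.Jop_nonneg hφa hGa hGpos x)
  have hQJle : ∀ x, (T x - ρu (T x)) + St9.Jop φ (fun y => ρu (T y)) x ≤ T x := by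
    intro x
    have h1 : St9.Jop φ (fun y => ρu (T y)) x ≤ ρu (T x) := St9.Jop_le_G hφa hGa hGpos x
    calc (T x - ρu (T x)) + St9.Jop φ (fun y => ρu (T y)) x
        ≤ (T x - ρu (T x)) + ρu (T x) := add_le_add_right h1 _
      _ = T x := by abel
  have hQJb : OrderBoundedMap (fun x => (T x - ρu (T x)) + St9.Jop φ (fun y => ρu (T y)) x) :=
    St9.obm_squeeze hQJpos hQJle hTb
  -- QJ is disjoint from S
  have hQJS : UDisjointPos (fun x => (T x - ρu (T x)) + St9.Jop φ (fun y => ρu (T y)) x) S := by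
    intro V hV hVQ hVS x
    have hz0 : (0:F) ≤ (V x)⁺ := posPart_nonneg _
    have hzu : (V x)⁺ ≤ φ x • u := by
      rw [posPart_def]
      exact sup_le ((hVS x).trans_eq (hSdef x)) (St9.smul_nonneg' (hφpos x) hu)
    have hzfix : ρu ((V x)⁺) = (V x)⁺ := by
      have hw0 : (0:F) ≤ (V x)⁺ - ρu ((V x)⁺) := sub_nonneg.2 (St9.bp_le_self hρu hz0)
      have hwu : ((V x)⁺ - ρu ((V x)⁺)) ⊓ u = 0 :=
        (hρuband _ hw0).1 (St9.bp_perp_zero hρu _)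
      have hwc : ((V x)⁺ - ρu ((V x)⁺)) ⊓ (φ x • u) = 0 :=
        St9.disj_smul_real hw0 hu hwu (hφpos x)
      have hwle : (V x)⁺ - ρu ((V x)⁺) ≤ φ x • u :=
        (sub_le_self _ (St9.bp_nonneg hρu hz0)).trans hzu
      have hw : (V x)⁺ - ρu ((V x)⁺) = 0 := by
        rw [← hwc, inf_eq_left.2 hwle]
      exact (sub_eq_zero.1 hw).symm
    have hrec : ∀ ε' : ℝ, 0 < ε' →
        (V x)⁺ + St9.bop φ (fun y => ρu (T y)) ε' x
          ≤ ε' • u + St9.bop φ (fun y => ρu (T y)) (2 * ε') x := by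
      intro ε' hε'
      have hkey : ∀ w ∈ {w : F | ∃ g, Fragment g x ∧ φ g ≤ ε' ∧ w = ρu (T g)},
          w ≤ ε' • u + St9.bop φ (fun y => ρu (T y)) (2 * ε') x - (V x)⁺ := by
        rintro w ⟨g, hg, hφg, rfl⟩
        have hVx : V x = V g + V (x - g) := St9.orth_frag hV.1 hg
        have hbd : V x ≤ φ g • u
            + ((T (x - g) - ρu (T (x - g))) + St9.Jop φ (fun y => ρu (T y)) (x - g)) := by
          rw [hVx]
          exact add_le_add ((hVS g).trans_eq (hSdef g)) (hVQ (x - g))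
        have hY0 : (0:F) ≤ φ g • u
            + ((T (x - g) - ρu (T (x - g))) + St9.Jop φ (fun y => ρu (T y)) (x - g)) :=
          add_nonneg (St9.smul_nonneg' (hφpos g) hu) (hQJpos (x - g))
        have hzY : (V x)⁺ ≤ φ g • u
            + ((T (x - g) - ρu (T (x - g))) + St9.Jop φ (fun y => ρu (T y)) (x - g)) := by
          rw [posPart_def]; exact sup_le hbd hY0
        have hzρ : (V x)⁺ ≤ φ g • u + St9.Jop φ (fun y => ρu (T y)) (x - g) := by
          have h7 := St9.bp_mono hρu hzY
          rw [hzfix, hρadd, hρadd, St9.bp_perp_zero hρu] at h7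
          refine h7.trans ?_
          rw [zero_add]
          exact add_le_add (St9.bp_le_self hρu (St9.smul_nonneg' (hφpos g) hu))
            (St9.bp_le_self hρu (St9.Jop_nonneg hφa hGa hGpos (x - g)))
        have hJle : St9.Jop φ (fun y => ρu (T y)) (x - g)
            ≤ St9.bop φ (fun y => ρu (T y)) ε' (x - g) :=
          St9.Jop_le_bop hφa hGa hGpos hε' (x - g)
        have hb2 : St9.bop φ (fun y => ρu (T y)) ε' (x - g)
            ≤ St9.bop φ (fun y => ρu (T y)) (2 * ε') x - ρu (T g) := by
          refine csSup_le (St9.bop_set_nonempty hφa hε'.le (x - g)) ?_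
          rintro w' ⟨h, hh, hφh, rfl⟩
          have hdisj : |g| ⊓ |h| = 0 :=
            St9.disj_mono (abs_nonneg _) (abs_nonneg _) le_rfl (St9.frag_abs_le hh) hg
          have hfr : Fragment (g + h) x := St9.frag_add_within hg hh
          have hmem3 : ρu (T (g + h)) ∈
              {w : F | ∃ g', Fragment g' x ∧ φ g' ≤ 2 * ε' ∧ w = ρu (T g')} :=
            ⟨g + h, hfr, by rw [hφa g h hdisj]; linarith, rfl⟩
          have h8 := le_csSup (St9.bop_bddAbove hGa hGpos (2 * ε') x) hmem3
          have h9 : ρu (T (g + h)) = ρu (T g) + ρu (T h) := by rw [hTa g h hdisj, hρadd]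
          rw [h9] at h8
          rw [le_sub_iff_add_le, add_comm]
          exact h8
        have hzb : (V x)⁺ ≤ ε' • u + (St9.bop φ (fun y => ρu (T y)) (2 * ε') x - ρu (T g)) :=
          hzρ.trans (add_le_add (St9.smul_mono_scalar hφg hu) (hJle.trans hb2))
        have h9 : (V x)⁺ + ρu (T g) ≤ ε' • u + St9.bop φ (fun y => ρu (T y)) (2 * ε') x := by
          have h10 := add_le_add_left hzb (ρu (T g))
          calc (V x)⁺ + ρu (T g)
              ≤ (ε' • u + (St9.bop φ (fun y => ρu (T y)) (2 * ε') x - ρu (T g))) + ρu (T g) :=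
                h10
            _ = ε' • u + St9.bop φ (fun y => ρu (T y)) (2 * ε') x := by abel
        rw [le_sub_iff_add_le, add_comm]
        exact h9
      have h10 : St9.bop φ (fun y => ρu (T y)) ε' x
          ≤ ε' • u + St9.bop φ (fun y => ρu (T y)) (2 * ε') x - (V x)⁺ :=
        csSup_le (St9.bop_set_nonempty hφa hε'.le x) hkey
      have h11 := add_le_add_right h10 ((V x)⁺)
      calc (V x)⁺ + St9.bop φ (fun y => ρu (T y)) ε' x
          ≤ (V x)⁺ + (ε' • u + St9.bop φ (fun y => ρu (T y)) (2 * ε') x - (V x)⁺) := h11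
        _ = ε' • u + St9.bop φ (fun y => ρu (T y)) (2 * ε') x := by abel
    have hind : ∀ n : ℕ, n • (V x)⁺ + St9.bop φ (fun y => ρu (T y)) ((1/2 : ℝ)^n) x
        ≤ (1 - (1/2 : ℝ)^n) • u + St9.bop φ (fun y => ρu (T y)) 1 x := by
      intro n
      induction n with
      | zero => simp
      | succ n ih =>
          have hε' : (0:ℝ) < (1/2 : ℝ)^(n+1) := by positivity
          have hstep := hrec ((1/2 : ℝ)^(n+1)) hε'
          have h2ε : 2 * (1/2 : ℝ)^(n+1) = (1/2 : ℝ)^n := by ring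
          rw [h2ε] at hstep
          have hsc : ((1/2:ℝ)^(n+1) + (1 - (1/2:ℝ)^n)) = (1 - (1/2:ℝ)^(n+1)) := by ring
          calc (n+1) • (V x)⁺ + St9.bop φ (fun y => ρu (T y)) ((1/2:ℝ)^(n+1)) x
              = n • (V x)⁺ + ((V x)⁺ + St9.bop φ (fun y => ρu (T y)) ((1/2:ℝ)^(n+1)) x) := by
                rw [succ_nsmul]; abel
            _ ≤ n • (V x)⁺ + ((1/2:ℝ)^(n+1) • u + St9.bop φ (fun y => ρu (T y)) ((1/2:ℝ)^n) x) :=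
                add_le_add_right hstep _
            _ = (1/2:ℝ)^(n+1) • u
                + (n • (V x)⁺ + St9.bop φ (fun y => ρu (T y)) ((1/2:ℝ)^n) x) := by abel
            _ ≤ (1/2:ℝ)^(n+1) • u
                + ((1 - (1/2:ℝ)^n) • u + St9.bop φ (fun y => ρu (T y)) 1 x) :=
                add_le_add_right ih _
            _ = ((1/2:ℝ)^(n+1) + (1 - (1/2:ℝ)^n)) • u + St9.bop φ (fun y => ρu (T y)) 1 x := by
                rw [add_smul]; abel
            _ = (1 - (1/2:ℝ)^(n+1)) • u + St9.bop φ (fun y => ρu (T y)) 1 x := by rw [hsc]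
    have harch : ∀ n : ℕ, n • (V x)⁺ ≤ u + St9.bop φ (fun y => ρu (T y)) 1 x := by
      intro n
      have h1 : n • (V x)⁺
          ≤ n • (V x)⁺ + St9.bop φ (fun y => ρu (T y)) ((1/2:ℝ)^n) x :=
        le_add_of_nonneg_right (St9.bop_nonneg hφa hGa hGpos (by positivity) x)
      refine (h1.trans (hind n)).trans ?_
      refine add_le_add_left ?_ _
      calc (1 - (1/2:ℝ)^n) • u ≤ (1:ℝ) • u :=
            St9.smul_mono_scalar (by nlinarith [pow_pos (by norm_num : (0:ℝ) < 1/2) n]) hu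
        _ = u := one_smul ℝ u
    have hz_le : (V x)⁺ ≤ 0 := St9.arch harch
    exact (le_posPart (V x)).trans hz_le
  -- QJ ≤ R
  have hQJsubR_a : OrthAdd
      (fun y => ((T y - ρu (T y)) + St9.Jop φ (fun y' => ρu (T y')) y) - R y) := by
    intro a b hab
    show ((T (a+b) - ρu (T (a+b))) + St9.Jop φ (fun y' => ρu (T y')) (a+b)) - R (a+b)
        = (((T a - ρu (T a)) + St9.Jop φ (fun y' => ρu (T y')) a) - R a)
          + (((T b - ρu (T b)) + St9.Jop φ (fun y' => ρu (T y')) b) - R b)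
    rw [hTa a b hab, hρadd, hJa a b hab, hRa a b hab]; abel
  have hQJR : ∀ y, (T y - ρu (T y)) + St9.Jop φ (fun y' => ρu (T y')) y ≤ R y := by
    intro y
    have h := hband _ ⟨hQJa, hQJb⟩ hQJpos hQJS
      (fun y' => ((T y' - ρu (T y')) + St9.Jop φ (fun y'' => ρu (T y'')) y') - R y')
      ⟨hQJsubR_a, St9.obm_sub hQJb hRb⟩
      (fun y' => sub_le_sub_right (hQJle y') (R y'))
      (fun y' => sub_le_self _ (hRpos y')) y
    exact sub_nonpos.1 h
  -- assembly
  have hIbdd : BddBelow {v : F | ∃ ε : ℝ, 0 < ε ∧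
      v = sSup {w : F | ∃ f : E, Fragment f e ∧ φ f ≤ ε * φ e ∧ w = ρu (T f)}} := by
    refine ⟨0, ?_⟩
    rintro v ⟨ε, hε, rfl⟩
    exact St9.bop_nonneg hφa hGa hGpos (mul_nonneg hε.le (hφpos e)) e
  have hRle : R e ≤ (T e - ρu (T e)) + sInf {v : F | ∃ ε : ℝ, 0 < ε ∧
      v = sSup {w : F | ∃ f : E, Fragment f e ∧ φ f ≤ ε * φ e ∧ w = ρu (T f)}} := by
    have h1 : ρu (R e) ≤ sInf {v : F | ∃ ε : ℝ, 0 < ε ∧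
        v = sSup {w : F | ∃ f : E, Fragment f e ∧ φ f ≤ ε * φ e ∧ w = ρu (T f)}} := by
      refine le_csInf ⟨_, 1, one_pos, rfl⟩ ?_
      rintro v ⟨ε, hε, rfl⟩
      exact hB1 ε hε
    calc R e = (R e - ρu (R e)) + ρu (R e) := by abel
      _ = (T e - ρu (T e)) + ρu (R e) := by rw [hClaimA e]
      _ ≤ _ := add_le_add_right h1 _
  have hJe : sInf {v : F | ∃ ε : ℝ, 0 < ε ∧
      v = sSup {w : F | ∃ f : E, Fragment f e ∧ φ f ≤ ε * φ e ∧ w = ρu (T f)}}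
      ≤ St9.Jop φ (fun y => ρu (T y)) e := by
    refine le_csInf (St9.Jop_set_nonempty e) ?_
    rintro v ⟨δ, hδ, rfl⟩
    rcases (hφpos e).eq_or_lt with h0 | hpos
    · have hA : sInf {v : F | ∃ ε : ℝ, 0 < ε ∧
          v = sSup {w : F | ∃ f : E, Fragment f e ∧ φ f ≤ ε * φ e ∧ w = ρu (T f)}}
          ≤ St9.bop φ (fun y => ρu (T y)) (1 * φ e) e :=
        csInf_le hIbdd ⟨1, one_pos, rfl⟩
      refine hA.trans ?_
      refine csSup_le (St9.bop_set_nonempty hφa (le_of_eq (by rw [← h0, mul_zero])) e) ?_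
      rintro w ⟨f, hf, hφf, rfl⟩
      refine le_csSup (St9.bop_bddAbove hGa hGpos δ e) ⟨f, hf, ?_, rfl⟩
      have h2 : φ f ≤ 0 := by
        have : (1:ℝ) * φ e = 0 := by rw [← h0, mul_zero]
        linarith [hφf, this]
      linarith
    · have hεδ : (0:ℝ) < δ / φ e := div_pos hδ hpos
      refine csInf_le hIbdd ⟨δ / φ e, hεδ, ?_⟩
      have hth : δ / φ e * φ e = δ := div_mul_cancel₀ δ hpos.ne'
      rw [hth]
      rfl
  refine le_antisymm hRle ?_
  calc (T e - ρu (T e)) + sInf {v : F | ∃ ε : ℝ, 0 < ε ∧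
        v = sSup {w : F | ∃ f : E, Fragment f e ∧ φ f ≤ ε * φ e ∧ w = ρu (T f)}}
      ≤ (T e - ρu (T e)) + St9.Jop φ (fun y => ρu (T y)) e := add_le_add_right hJe _
    _ ≤ R e := hQJR e
end

section
/- Let E, F be vector lattices with F Dedekind complete and T : E → F a positive abstract Uryson operator. Then the null set N_T = { e ∈ E : Te = 0 } is an admissible set. -/
/-- A subset `D` of a vector lattice is admissible if it contains every fragment of each
of its elements and is closed under sums of disjoint pairs of its elements. -/
def Admissible {E : Type*} [Lattice E] [AddCommGroup E] (D : Set E) : Prop :=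
  (∀ x ∈ D, ∀ y : E, Fragment y x → y ∈ D) ∧
    ∀ x ∈ D, ∀ y ∈ D, |x| ⊓ |y| = 0 → x + y ∈ D

/-- For a positive abstract Uryson operator `T : E → F` (`F` Dedekind complete), the null
set `N_T = { e : T e = 0 }` is admissible. -/
theorem stmt12 {E F : Type*} [Lattice E] [AddCommGroup E]
    [CovariantClass E E (· + ·) (· ≤ ·)] [Module ℝ E]
    [ConditionallyCompleteLattice F] [AddCommGroup F]
    [CovariantClass F F (· + ·) (· ≤ ·)] [Module ℝ F]
    (T : E → F) (hT : Uryson T) (hTpos : ∀ x, 0 ≤ T x) :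
    Admissible {e : E | T e = 0} := by
  obtain ⟨hOA, -⟩ := hT
  constructor
  · intro x hx y hy
    have hsum : T x = T y + T (x - y) := by
      have := hOA y (x - y) hy
      simpa using this
    have h0 : T y + T (x - y) = 0 := by rw [← hsum]; exact hx
    have h1 : T y ≤ 0 := by
      have := hTpos (x - y)
      calc T y = T y + 0 := by rw [add_zero]
        _ ≤ T y + T (x - y) := by exact add_le_add_right this _
        _ = 0 := h0
    exact le_antisymm h1 (hTpos y)
  · intro x hx y hy hxy
    have := hOA x y hxy
    simp only [Set.mem_setOf_eq] at hx hy ⊢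
    rw [this, hx, hy, add_zero]
end

section
/- Let E, F be vector lattices with F Dedekind complete, T : E → F a positive abstract Uryson operator, and D ⊆ E an admissible set. Define π^D T (x) = sup{ Ty : y ⊑ x, y ∈ D }. Then π^D T is a positive abstract Uryson operator and π^D T is a fragment of T in the vector lattice U(E,F), i.e., π^D T ⊥ (T − π^D T). -/
set_option linter.unusedSectionVars false

section LatticeHelpers

variable {α : Type*} [Lattice α] [AddCommGroup α] [CovariantClass α α (· + ·) (· ≤ ·)]

private lemma infAddLe {a b c : α} (ha : 0 ≤ a) (hb : 0 ≤ b) (hc : 0 ≤ c) :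
    a ⊓ (b + c) ≤ a ⊓ b + a ⊓ c := by
  have h : a ⊓ b + a ⊓ c = ((a + a) ⊓ (a + c)) ⊓ ((b + a) ⊓ (b + c)) := by
    rw [inf_add, add_inf, add_inf]
  rw [h]
  refine le_inf (le_inf ?_ ?_) (le_inf ?_ ?_)
  · exact inf_le_left.trans (le_add_of_nonneg_right ha)
  · exact inf_le_left.trans (le_add_of_nonneg_right hc)
  · exact inf_le_left.trans (le_add_of_nonneg_left hb)
  · exact inf_le_right

private lemma addInfLe {a b c : α} (ha : 0 ≤ a) (hb : 0 ≤ b) (hc : 0 ≤ c) :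
    (a + b) ⊓ c ≤ a ⊓ c + b ⊓ c := by
  rw [inf_comm (a + b) c, inf_comm a c, inf_comm b c]
  exact infAddLe hc ha hb

private lemma inf4 {a b c d : α} (ha : 0 ≤ a) (hb : 0 ≤ b) (hc : 0 ≤ c) (hd : 0 ≤ d) :
    (a + b) ⊓ (c + d) ≤ (a ⊓ c + a ⊓ d) + (b ⊓ c + b ⊓ d) :=
  (addInfLe ha hb (add_nonneg hc hd)).trans
    (add_le_add (infAddLe ha hc hd) (infAddLe hb hc hd))

private lemma disjMono {a b a' b' : α} (h : |a'| ⊓ |b'| = 0) (ha : |a| ≤ |a'|)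
    (hb : |b| ≤ |b'|) : |a| ⊓ |b| = 0 :=
  le_antisymm (h ▸ inf_le_inf ha hb) (le_inf (abs_nonneg a) (abs_nonneg b))

private lemma absAddDisj {a b : α} (h : |a| ⊓ |b| = 0) : |a + b| = |a| + |b| := by
  refine le_antisymm (abs_add_le a b) ?_
  have key : ∀ u v : α, |u| ⊓ |v| = 0 → |u| ≤ |u + v| := by
    intro u v huv
    have h1 : |u| ≤ |u + v| + |v| := by
      calc |u| = |(u + v) + (-v)| := by rw [add_neg_cancel_right]
        _ ≤ |u + v| + |(-v)| := abs_add_le _ _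
        _ = |u + v| + |v| := by rw [abs_neg]
    calc |u| = |u| ⊓ (|u + v| + |v|) := (inf_eq_left.2 h1).symm
      _ ≤ |u| ⊓ |u + v| + |u| ⊓ |v| := infAddLe (abs_nonneg u) (abs_nonneg _) (abs_nonneg v)
      _ = |u| ⊓ |u + v| := by rw [huv, add_zero]
      _ ≤ |u + v| := inf_le_right
  have hA : |a| ≤ |a + b| := key a b h
  have hB : |b| ≤ |a + b| := by
    have := key b a (by rwa [inf_comm]); rwa [add_comm] at this
  calc |a| + |b| = |a| ⊓ |b| + (|a| ⊔ |b|) := (inf_add_sup _ _).symm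
    _ = |a| ⊔ |b| := by rw [h, zero_add]
    _ ≤ |a + b| := sup_le hA hB

private lemma fragSelf (x : α) : Fragment x x := by
  simp only [Fragment, sub_self, abs_zero]
  exact inf_eq_right.2 (abs_nonneg x)

private lemma fragZero (x : α) : Fragment 0 x := by
  simp only [Fragment, sub_zero, abs_zero]
  exact inf_eq_left.2 (abs_nonneg x)

private lemma fragAbsLe {y x : α} (h : Fragment y x) : |y| ≤ |x| := by
  have hx : x = y + (x - y) := by abel
  calc |y| ≤ |y| + |x - y| := le_add_of_nonneg_right (abs_nonneg _)
    _ = |y + (x - y)| := (absAddDisj h).symm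
    _ = |x| := by rw [← hx]

private lemma fragCompl {y x : α} (h : Fragment y x) : Fragment (x - y) x := by
  unfold Fragment at h ⊢
  rw [sub_sub_cancel, inf_comm]
  exact h

/-- Riesz decomposition for fragments, positive case. -/
private lemma decompPos {u v z : α} (hu : 0 ≤ u) (hv : 0 ≤ v) (huv : u ⊓ v = 0)
    (hz : 0 ≤ z) (hf : Fragment z (u + v)) :
    Fragment (z ⊓ u) u ∧ Fragment (z - z ⊓ u) v ∧ 0 ≤ z ⊓ u ∧ 0 ≤ z - z ⊓ u := by
  have hzuv : z ≤ u + v := by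
    calc z ≤ |z| := le_abs_self z
      _ ≤ |u + v| := fragAbsLe hf
      _ = u + v := abs_of_nonneg (add_nonneg hu hv)
  have h0 : z ⊓ (u + v - z) = 0 := by
    have := hf
    unfold Fragment at this
    rwa [abs_of_nonneg hz, abs_of_nonneg (sub_nonneg.2 hzuv)] at this
  have hz1 : 0 ≤ z ⊓ u := le_inf hz hu
  have hz2 : 0 ≤ z - z ⊓ u := sub_nonneg.2 inf_le_left
  have hz2v : z - z ⊓ u ≤ v := by
    rw [sub_le_iff_le_add, add_comm v (z ⊓ u), inf_add]
    exact le_inf (le_add_of_nonneg_right hv) hzuv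
  refine ⟨?_, ?_, hz1, hz2⟩
  · unfold Fragment
    rw [abs_of_nonneg hz1, abs_of_nonneg (sub_nonneg.2 inf_le_right)]
    refine le_antisymm ?_ (le_inf hz1 (sub_nonneg.2 inf_le_right))
    have hle : u - z ⊓ u ≤ u + v - z := by
      have : u - z ⊓ u = u + (z - z ⊓ u) - z := by abel
      rw [this]
      exact sub_le_sub_right (add_le_add_right hz2v u) z
    calc z ⊓ u ⊓ (u - z ⊓ u) ≤ z ⊓ (u + v - z) := inf_le_inf inf_le_left hle
      _ = 0 := h0
  · unfold Fragment
    rw [abs_of_nonneg hz2, abs_of_nonneg (sub_nonneg.2 hz2v)]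
    refine le_antisymm ?_ (le_inf hz2 (sub_nonneg.2 hz2v))
    have hle : v - (z - z ⊓ u) ≤ u + v - z := by
      have : v - (z - z ⊓ u) = v + (z ⊓ u) - z := by abel
      rw [this]
      calc v + z ⊓ u - z ≤ v + u - z := sub_le_sub_right (add_le_add_right inf_le_right v) z
        _ = u + v - z := by abel
    calc (z - z ⊓ u) ⊓ (v - (z - z ⊓ u)) ≤ z ⊓ (u + v - z) :=
          inf_le_inf (sub_le_self z hz1) hle
      _ = 0 := h0

private lemma ppLeAbs (a : α) : a⁺ ≤ |a| := by
  calc a⁺ = a⁺ + 0 := (add_zero _).symm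
    _ ≤ a⁺ + a⁻ := add_le_add_right (negPart_nonneg a) _
    _ = |a| := posPart_add_negPart a

private lemma npLeAbs (a : α) : a⁻ ≤ |a| := by
  calc a⁻ = 0 + a⁻ := (zero_add _).symm
    _ ≤ a⁺ + a⁻ := add_le_add_left (posPart_nonneg a) _
    _ = |a| := posPart_add_negPart a

variable [Module ℝ α]

private lemma halfCancel {a b : α} (h : a + a = b + b) : a = b := by
  have h2 : (2 : ℝ) • a = (2 : ℝ) • b := by rw [two_smul, two_smul]; exact h
  have := congrArg (fun x : α => (2 : ℝ)⁻¹ • x) h2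
  simpa [smul_smul] using this

private lemma ppAddDisj {a b : α} (h : |a| ⊓ |b| = 0) : (a + b)⁺ = a⁺ + b⁺ := by
  apply halfCancel
  have e : ∀ c : α, c⁺ + c⁺ = c + |c| := by
    intro c
    calc c⁺ + c⁺ = (c⁺ - c⁻) + (c⁺ + c⁻) := by abel
      _ = c + |c| := by rw [posPart_sub_negPart, posPart_add_negPart]
  rw [e, absAddDisj h]
  calc a + b + (|a| + |b|) = (a + |a|) + (b + |b|) := by abel
    _ = (a⁺ + a⁺) + (b⁺ + b⁺) := by rw [e a, e b]
    _ = a⁺ + b⁺ + (a⁺ + b⁺) := by abel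

private lemma npAddDisj {a b : α} (h : |a| ⊓ |b| = 0) : (a + b)⁻ = a⁻ + b⁻ := by
  apply halfCancel
  have e : ∀ c : α, c⁻ + c⁻ = |c| - c := by
    intro c
    calc c⁻ + c⁻ = (c⁺ + c⁻) - (c⁺ - c⁻) := by abel
      _ = |c| - c := by rw [posPart_sub_negPart, posPart_add_negPart]
  rw [e, absAddDisj h]
  calc |a| + |b| - (a + b) = (|a| - a) + (|b| - b) := by abel
    _ = (a⁻ + a⁻) + (b⁻ + b⁻) := by rw [e a, e b]
    _ = a⁻ + b⁻ + (a⁻ + b⁻) := by abel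

/-- Riesz decomposition for fragments, general case. -/
private lemma decompFrag {x y z : α} (hxy : |x| ⊓ |y| = 0) (hz : Fragment z (x + y)) :
    ∃ z₁ z₂ : α, z = z₁ + z₂ ∧ Fragment z₁ x ∧ Fragment z₂ y ∧
      Fragment z₁ z ∧ Fragment z₂ z ∧ |z₁| ⊓ |z₂| = 0 := by
  have hw : z + ((x + y) - z) = x + y := by abel
  -- fragments of positive parts
  have hppfrag : Fragment z⁺ (x⁺ + y⁺) := by
    have h1 : (x + y)⁺ = z⁺ + ((x + y) - z)⁺ := by
      rw [← ppAddDisj hz, hw]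
    unfold Fragment
    rw [← ppAddDisj hxy, h1, add_sub_cancel_left,
      abs_of_nonneg (posPart_nonneg _), abs_of_nonneg (posPart_nonneg _)]
    refine le_antisymm ?_ (le_inf (posPart_nonneg _) (posPart_nonneg _))
    calc z⁺ ⊓ ((x + y) - z)⁺ ≤ |z| ⊓ |(x + y) - z| := inf_le_inf (ppLeAbs z) (ppLeAbs _)
      _ = 0 := hz
  have hnpfrag : Fragment z⁻ (x⁻ + y⁻) := by
    have h1 : (x + y)⁻ = z⁻ + ((x + y) - z)⁻ := by
      rw [← npAddDisj hz, hw]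
    unfold Fragment
    rw [← npAddDisj hxy, h1, add_sub_cancel_left,
      abs_of_nonneg (negPart_nonneg _), abs_of_nonneg (negPart_nonneg _)]
    refine le_antisymm ?_ (le_inf (negPart_nonneg _) (negPart_nonneg _))
    calc z⁻ ⊓ ((x + y) - z)⁻ ≤ |z| ⊓ |(x + y) - z| := inf_le_inf (npLeAbs z) (npLeAbs _)
      _ = 0 := hz
  have hxpyp : x⁺ ⊓ y⁺ = 0 :=
    le_antisymm (hxy ▸ inf_le_inf (ppLeAbs x) (ppLeAbs y))
      (le_inf (posPart_nonneg x) (posPart_nonneg y))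
  have hxnyn : x⁻ ⊓ y⁻ = 0 :=
    le_antisymm (hxy ▸ inf_le_inf (npLeAbs x) (npLeAbs y))
      (le_inf (negPart_nonneg x) (negPart_nonneg y))
  obtain ⟨hp1, hp2, hp1n, hp2n⟩ := decompPos (posPart_nonneg x) (posPart_nonneg y)
    hxpyp (posPart_nonneg z) hppfrag
  obtain ⟨hn1, hn2, hn1n, hn2n⟩ := decompPos (negPart_nonneg x) (negPart_nonneg y)
    hxnyn (negPart_nonneg z) hnpfrag
  set p₁ := z⁺ ⊓ x⁺ with hp₁
  set p₂ := z⁺ - p₁ with hp₂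
  set n₁ := z⁻ ⊓ x⁻ with hn₁
  set n₂ := z⁻ - n₁ with hn₂
  -- strip absolute values from the positive-case fragments
  have e1 : p₁ ⊓ (x⁺ - p₁) = 0 := by
    have := hp1; unfold Fragment at this
    rwa [abs_of_nonneg hp1n, abs_of_nonneg (sub_nonneg.2 inf_le_right)] at this
  have e2 : n₁ ⊓ (x⁻ - n₁) = 0 := by
    have := hn1; unfold Fragment at this
    rwa [abs_of_nonneg hn1n, abs_of_nonneg (sub_nonneg.2 inf_le_right)] at this
  have hp2y : p₂ ≤ y⁺ := by
    have := fragAbsLe hp2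
    rwa [abs_of_nonneg hp2n, abs_of_nonneg (posPart_nonneg y)] at this
  have hn2y : n₂ ≤ y⁻ := by
    have := fragAbsLe hn2
    rwa [abs_of_nonneg hn2n, abs_of_nonneg (negPart_nonneg y)] at this
  have e3 : p₂ ⊓ (y⁺ - p₂) = 0 := by
    have := hp2; unfold Fragment at this
    rwa [abs_of_nonneg hp2n, abs_of_nonneg (sub_nonneg.2 hp2y)] at this
  have e4 : n₂ ⊓ (y⁻ - n₂) = 0 := by
    have := hn2; unfold Fragment at this
    rwa [abs_of_nonneg hn2n, abs_of_nonneg (sub_nonneg.2 hn2y)] at this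
  have habs1 : |p₁ - n₁| ≤ p₁ + n₁ := by
    calc |p₁ - n₁| = |p₁ + (-n₁)| := by rw [sub_eq_add_neg]
      _ ≤ |p₁| + |(-n₁)| := abs_add_le _ _
      _ = p₁ + n₁ := by rw [abs_neg, abs_of_nonneg hp1n, abs_of_nonneg hn1n]
  have habs2 : |p₂ - n₂| ≤ p₂ + n₂ := by
    calc |p₂ - n₂| = |p₂ + (-n₂)| := by rw [sub_eq_add_neg]
      _ ≤ |p₂| + |(-n₂)| := abs_add_le _ _
      _ = p₂ + n₂ := by rw [abs_neg, abs_of_nonneg hp2n, abs_of_nonneg hn2n]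
  have hxabs : |x - (p₁ - n₁)| ≤ (x⁺ - p₁) + (x⁻ - n₁) := by
    have hxx : x - (p₁ - n₁) = (x⁺ - p₁) + (-(x⁻ - n₁)) := by
      have := posPart_sub_negPart x
      calc x - (p₁ - n₁) = (x⁺ - x⁻) - (p₁ - n₁) := by rw [this]
        _ = (x⁺ - p₁) + (-(x⁻ - n₁)) := by abel
    calc |x - (p₁ - n₁)| = |(x⁺ - p₁) + (-(x⁻ - n₁))| := by rw [hxx]
      _ ≤ |x⁺ - p₁| + |(-(x⁻ - n₁))| := abs_add_le _ _
      _ = (x⁺ - p₁) + (x⁻ - n₁) := by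
          rw [abs_neg, abs_of_nonneg (sub_nonneg.2 inf_le_right),
            abs_of_nonneg (sub_nonneg.2 inf_le_right)]
  have hyabs : |y - (p₂ - n₂)| ≤ (y⁺ - p₂) + (y⁻ - n₂) := by
    have hyy : y - (p₂ - n₂) = (y⁺ - p₂) + (-(y⁻ - n₂)) := by
      have := posPart_sub_negPart y
      calc y - (p₂ - n₂) = (y⁺ - y⁻) - (p₂ - n₂) := by rw [this]
        _ = (y⁺ - p₂) + (-(y⁻ - n₂)) := by abel
    calc |y - (p₂ - n₂)| = |(y⁺ - p₂) + (-(y⁻ - n₂))| := by rw [hyy]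
      _ ≤ |y⁺ - p₂| + |(-(y⁻ - n₂))| := abs_add_le _ _
      _ = (y⁺ - p₂) + (y⁻ - n₂) := by
          rw [abs_neg, abs_of_nonneg (sub_nonneg.2 hp2y), abs_of_nonneg (sub_nonneg.2 hn2y)]
  have hxpn : 0 ≤ x⁺ - p₁ := sub_nonneg.2 inf_le_right
  have hxnn : 0 ≤ x⁻ - n₁ := sub_nonneg.2 inf_le_right
  have hypn : 0 ≤ y⁺ - p₂ := sub_nonneg.2 hp2y
  have hynn : 0 ≤ y⁻ - n₂ := sub_nonneg.2 hn2y
  have hxinf : x⁺ ⊓ x⁻ = 0 := posPart_inf_negPart_eq_zero x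
  have hyinf : y⁺ ⊓ y⁻ = 0 := posPart_inf_negPart_eq_zero y
  have hfragx : Fragment (p₁ - n₁) x := by
    unfold Fragment
    refine le_antisymm ?_ (le_inf (abs_nonneg _) (abs_nonneg _))
    calc |p₁ - n₁| ⊓ |x - (p₁ - n₁)| ≤ (p₁ + n₁) ⊓ ((x⁺ - p₁) + (x⁻ - n₁)) :=
          inf_le_inf habs1 hxabs
      _ ≤ (p₁ ⊓ (x⁺ - p₁) + p₁ ⊓ (x⁻ - n₁)) + (n₁ ⊓ (x⁺ - p₁) + n₁ ⊓ (x⁻ - n₁)) :=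
          inf4 hp1n hn1n hxpn hxnn
      _ ≤ (0 + 0) + (0 + 0) := by
          refine add_le_add (add_le_add ?_ ?_) (add_le_add ?_ ?_)
          · exact e1.le
          · exact le_trans (inf_le_inf inf_le_right (sub_le_self _ hn1n)) hxinf.le
          · exact le_trans (inf_le_inf inf_le_right (sub_le_self _ hp1n))
              (by rw [inf_comm]; exact hxinf.le)
          · exact e2.le
      _ = 0 := by simp
  have hfragy : Fragment (p₂ - n₂) y := by
    unfold Fragment
    refine le_antisymm ?_ (le_inf (abs_nonneg _) (abs_nonneg _))
    calc |p₂ - n₂| ⊓ |y - (p₂ - n₂)| ≤ (p₂ + n₂) ⊓ ((y⁺ - p₂) + (y⁻ - n₂)) :=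
          inf_le_inf habs2 hyabs
      _ ≤ (p₂ ⊓ (y⁺ - p₂) + p₂ ⊓ (y⁻ - n₂)) + (n₂ ⊓ (y⁺ - p₂) + n₂ ⊓ (y⁻ - n₂)) :=
          inf4 hp2n hn2n hypn hynn
      _ ≤ (0 + 0) + (0 + 0) := by
          refine add_le_add (add_le_add ?_ ?_) (add_le_add ?_ ?_)
          · exact e3.le
          · exact le_trans (inf_le_inf hp2y (sub_le_self _ hn2n)) hyinf.le
          · exact le_trans (inf_le_inf hn2y (sub_le_self _ hp2n))
              (by rw [inf_comm]; exact hyinf.le)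
          · exact e4.le
      _ = 0 := by simp
  have hdisj : |p₁ - n₁| ⊓ |p₂ - n₂| = 0 := by
    refine le_antisymm ?_ (le_inf (abs_nonneg _) (abs_nonneg _))
    have h1 : |p₁ - n₁| ≤ |x| := by
      calc |p₁ - n₁| ≤ p₁ + n₁ := habs1
        _ ≤ x⁺ + x⁻ := add_le_add inf_le_right inf_le_right
        _ = |x| := posPart_add_negPart x
    have h2 : |p₂ - n₂| ≤ |y| := by
      calc |p₂ - n₂| ≤ p₂ + n₂ := habs2
        _ ≤ y⁺ + y⁻ := add_le_add hp2y hn2y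
        _ = |y| := posPart_add_negPart y
    calc |p₁ - n₁| ⊓ |p₂ - n₂| ≤ |x| ⊓ |y| := inf_le_inf h1 h2
      _ = 0 := hxy
  have hsum : z = (p₁ - n₁) + (p₂ - n₂) := by
    have h : (p₁ - n₁) + (p₂ - n₂) = z⁺ - z⁻ := by rw [hp₂, hn₂]; abel
    rw [h, posPart_sub_negPart]
  refine ⟨p₁ - n₁, p₂ - n₂, hsum, hfragx, hfragy, ?_, ?_, hdisj⟩
  · unfold Fragment
    have : z - (p₁ - n₁) = p₂ - n₂ := by rw [hsum]; abel
    rw [this]; exact hdisj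
  · unfold Fragment
    have : z - (p₂ - n₂) = p₁ - n₁ := by rw [hsum]; abel
    rw [this, inf_comm]; exact hdisj

end LatticeHelpers

/-- For a positive abstract Uryson operator `T : E → F` (`F` Dedekind complete) and an
admissible set `D ⊆ E`, the operator `π^D T : x ↦ sup { T y : y ⊑ x, y ∈ D }` is a
positive abstract Uryson operator and a fragment of `T` in `U(E,F)`, i.e.
`π^D T ⊥ (T - π^D T)`. -/
theorem stmt13 {E F : Type} [Lattice E] [AddCommGroup E]
    [CovariantClass E E (· + ·) (· ≤ ·)] [Module ℝ E]
    [ConditionallyCompleteLattice F] [AddCommGroup F]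
    [CovariantClass F F (· + ·) (· ≤ ·)] [Module ℝ F]
    (T : E → F) (hT : Uryson T) (hTpos : ∀ x, 0 ≤ T x)
    (D : Set E) (hD : Admissible D) (hD0 : (0 : E) ∈ D)
    (P : E → F) (hP : ∀ x, P x = sSup {v : F | ∃ y : E, Fragment y x ∧ y ∈ D ∧ v = T y}) :
    Uryson P ∧ (∀ x, 0 ≤ P x) ∧ UDisjointPos P (fun x => T x - P x) := by
  set S : E → Set F := fun x => {v : F | ∃ y : E, Fragment y x ∧ y ∈ D ∧ v = T y} with hS
  -- T 0 = 0
  have hT0 : T 0 = 0 := by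
    have h := hT.1 0 0 (by simp)
    rw [add_zero] at h
    exact left_eq_add.1 h
  have hmem0 : ∀ x : E, (0 : F) ∈ S x := fun x => ⟨0, fragZero x, hD0, hT0.symm⟩
  have hne : ∀ x : E, (S x).Nonempty := fun x => ⟨0, hmem0 x⟩
  -- bounded above
  have hbdd : ∀ x : E, BddAbove (S x) := by
    intro x
    obtain ⟨c, d, h⟩ := hT.2 (-|x|) |x|
    refine ⟨d, ?_⟩
    rintro v ⟨y, hyf, -, rfl⟩
    have hy := abs_le'.1 (fragAbsLe hyf)
    exact (h y ⟨neg_le.1 hy.2, hy.1⟩).2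
  have hPpos : ∀ x, 0 ≤ P x := fun x => (hP x) ▸ le_csSup (hbdd x) (hmem0 x)
  have hkey : ∀ x y : E, Fragment y x → y ∈ D → T y ≤ P x := fun x y hf hm =>
    (hP x) ▸ le_csSup (hbdd x) ⟨y, hf, hm, rfl⟩
  -- orthogonal additivity of P
  have hPOA : OrthAdd P := by
    intro x y hxy
    rw [hP (x + y), hP x, hP y]
    refine le_antisymm ?_ ?_
    · refine csSup_le (hne (x + y)) ?_
      rintro v ⟨z, hzf, hzD, rfl⟩
      obtain ⟨z₁, z₂, hsum, hz₁x, hz₂y, hz₁z, hz₂z, hdisj⟩ := decompFrag hxy hzf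
      have hz₁D : z₁ ∈ D := hD.1 z hzD z₁ hz₁z
      have hz₂D : z₂ ∈ D := hD.1 z hzD z₂ hz₂z
      have hTz : T z = T z₁ + T z₂ := by rw [hsum]; exact hT.1 z₁ z₂ hdisj
      rw [hTz]
      exact add_le_add (le_csSup (hbdd x) ⟨z₁, hz₁x, hz₁D, rfl⟩)
        (le_csSup (hbdd y) ⟨z₂, hz₂y, hz₂D, rfl⟩)
    · -- sSup (S x) + sSup (S y) ≤ sSup (S (x+y))
      have step : ∀ u ∈ S x, ∀ w ∈ S y, u + w ≤ sSup (S (x + y)) := by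
        rintro u ⟨z₁, hz₁x, hz₁D, rfl⟩ w ⟨z₂, hz₂y, hz₂D, rfl⟩
        have h1 : |z₁| ≤ |x| := fragAbsLe hz₁x
        have h2 : |z₂| ≤ |y| := fragAbsLe hz₂y
        have hdisj : |z₁| ⊓ |z₂| = 0 := disjMono hxy h1 h2
        have hmemD : z₁ + z₂ ∈ D := hD.2 z₁ hz₁D z₂ hz₂D hdisj
        have h3 : |x - z₁| ≤ |x| := fragAbsLe (fragCompl hz₁x)
        have h4 : |y - z₂| ≤ |y| := fragAbsLe (fragCompl hz₂y)
        have hdisj2 : |x - z₁| ⊓ |y - z₂| = 0 := disjMono hxy h3 h4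
        have hfrag : Fragment (z₁ + z₂) (x + y) := by
          unfold Fragment
          have hrw : x + y - (z₁ + z₂) = (x - z₁) + (y - z₂) := by abel
          rw [hrw, absAddDisj hdisj, absAddDisj hdisj2]
          refine le_antisymm ?_ (le_inf (add_nonneg (abs_nonneg _) (abs_nonneg _))
            (add_nonneg (abs_nonneg _) (abs_nonneg _)))
          calc (|z₁| + |z₂|) ⊓ (|x - z₁| + |y - z₂|)
              ≤ (|z₁| ⊓ |x - z₁| + |z₁| ⊓ |y - z₂|) +
                (|z₂| ⊓ |x - z₁| + |z₂| ⊓ |y - z₂|) :=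
                inf4 (abs_nonneg _) (abs_nonneg _) (abs_nonneg _) (abs_nonneg _)
            _ ≤ (0 + 0) + (0 + 0) := by
                refine add_le_add (add_le_add ?_ ?_) (add_le_add ?_ ?_)
                · exact le_of_eq hz₁x
                · exact le_of_eq (disjMono hxy h1 h4)
                · exact le_of_eq (disjMono (by rw [inf_comm]; exact hxy) h2 h3)
                · exact le_of_eq hz₂y
            _ = 0 := by simp
        have hTz : T (z₁ + z₂) = T z₁ + T z₂ := hT.1 z₁ z₂ hdisj
        calc T z₁ + T z₂ = T (z₁ + z₂) := hTz.symm
          _ ≤ sSup (S (x + y)) := le_csSup (hbdd (x + y)) ⟨z₁ + z₂, hfrag, hmemD, rfl⟩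
      have h1 : ∀ u ∈ S x, u ≤ sSup (S (x + y)) - sSup (S y) := by
        intro u hu
        have h2 : sSup (S y) ≤ sSup (S (x + y)) - u := by
          refine csSup_le (hne y) ?_
          intro w hw
          rw [le_sub_iff_add_le, add_comm]
          exact step u hu w hw
        rw [le_sub_iff_add_le, add_comm u (sSup (S y))]
        exact le_sub_iff_add_le.1 h2
      rw [← le_sub_iff_add_le]
      exact csSup_le (hne x) h1
  -- order boundedness of P
  have hPOB : OrderBoundedMap P := by
    intro a b
    obtain ⟨c, d, h⟩ := hT.2 (-(|a| + |b|)) (|a| + |b|)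
    refine ⟨0, d ⊔ 0, ?_⟩
    intro x hx
    refine ⟨hPpos x, ?_⟩
    rw [hP x]
    refine csSup_le (hne x) ?_
    rintro v ⟨y, hyf, -, rfl⟩
    have hxle : |x| ≤ |a| + |b| := by
      refine abs_le'.2 ⟨?_, ?_⟩
      · exact le_trans hx.2 (le_trans (le_abs_self b) (le_add_of_nonneg_left (abs_nonneg a)))
      · have hna : -x ≤ -a := neg_le.2 (by rw [neg_neg]; exact hx.1)
        exact le_trans hna (le_trans (neg_le_abs a)
          (le_add_of_nonneg_right (abs_nonneg b)))
    have hyle : |y| ≤ |a| + |b| := le_trans (fragAbsLe hyf) hxle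
    have hy := abs_le'.1 hyle
    exact le_trans (h y ⟨neg_le.1 hy.2, hy.1⟩).2 le_sup_left
  refine ⟨⟨hPOA, hPOB⟩, hPpos, ?_⟩
  -- disjointness
  intro R hR hRP hRTP x
  have hx : ∀ v ∈ S x, v ≤ P x - R x := by
    rintro v ⟨y, hyf, hyD, rfl⟩
    have hyx : y + (x - y) = x := by abel
    have hsplitR : R x = R y + R (x - y) := by
      have := hR.1 y (x - y) hyf
      rwa [hyx] at this
    have hsplitP : P x = P y + P (x - y) := by
      have := hPOA y (x - y) hyf
      rwa [hyx] at this
    have hRy : R y ≤ 0 := by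
      have h1 : R y ≤ T y - P y := hRTP y
      have h2 : T y ≤ P y := hkey y y (fragSelf y) hyD
      exact le_trans h1 (sub_nonpos.2 h2)
    have hRx : R x ≤ P x - T y := by
      calc R x = R y + R (x - y) := hsplitR
        _ ≤ 0 + P (x - y) := add_le_add hRy (hRP (x - y))
        _ = P (x - y) := zero_add _
        _ = P x - P y := by rw [hsplitP]; abel
        _ ≤ P x - T y := sub_le_sub_left (hkey y y (fragSelf y) hyD) _
    rw [le_sub_iff_add_le, add_comm (T y) (R x)]
    exact le_sub_iff_add_le.1 hRx
  have hfinal : P x ≤ P x - R x := by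
    calc P x = sSup (S x) := hP x
      _ ≤ P x - R x := csSup_le (hne x) hx
  have := le_sub_iff_add_le.1 hfinal
  exact (add_le_iff_nonpos_right _).1 this
end

section
/- Let E, F be vector lattices with F Dedekind complete, T : E → F a positive abstract Uryson operator, ρ a band projection on F, and D ⊆ E an admissible set. Then the map Π : U(E,F) → U(E,F), Π(T) = ρ ∘ (π^D T), satisfies 0 ≤ Π(T) ≤ T for every positive T and Π² = Π; hence Π is an order projection on U(E,F). -/
/-- `π^D T : x ↦ sup { T y : y ⊑ x, y ∈ D }` followed by a band projection `ρ` on `F`. -/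
def PiProj {E F : Type*} [Lattice E] [AddCommGroup E]
    [ConditionallyCompleteLattice F] [AddCommGroup F]
    (ρ : F → F) (D : Set E) (T : E → F) : E → F :=
  fun x => ρ (sSup {v : F | ∃ y : E, Fragment y x ∧ y ∈ D ∧ v = T y})


namespace Stmt19Aux

section LatGrp
variable {α : Type*} [Lattice α] [AddCommGroup α] [CovariantClass α α (· + ·) (· ≤ ·)]

lemma inf_add_le3 {a b c : α} (ha : 0 ≤ a) (hb : 0 ≤ b) (hc : 0 ≤ c) :
    c ⊓ (a + b) ≤ c ⊓ a + c ⊓ b := by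
  have key : c ⊓ (a + b) - c ⊓ a = (c ⊓ (a + b) - c) ⊔ (c ⊓ (a + b) - a) := by
    rw [sub_eq_add_neg, neg_inf, add_sup, ← sub_eq_add_neg, ← sub_eq_add_neg]
  have h1 : c ⊓ (a + b) - c ≤ c ⊓ b :=
    le_trans (by simp) (le_inf hc hb)
  have h2 : c ⊓ (a + b) - a ≤ c ⊓ b := by
    refine le_inf ?_ ?_
    · exact (sub_le_sub_right (inf_le_left (b := a + b)) a).trans (by simpa using ha)
    · exact (sub_le_sub_right (inf_le_right (a := c)) a).trans (by simp [add_comm])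
  have h3 : c ⊓ (a + b) - c ⊓ a ≤ c ⊓ b := by rw [key]; exact sup_le h1 h2
  exact (sub_le_iff_le_add.mp h3).trans_eq (add_comm _ _)

/-- If `a ⊓ c = 0` and `b ⊓ c = 0` for nonneg `a b c`, then `(a+b) ⊓ c = 0`. -/
lemma add_inf_zero {a b c : α} (ha : 0 ≤ a) (hb : 0 ≤ b) (hc : 0 ≤ c)
    (h1 : a ⊓ c = 0) (h2 : b ⊓ c = 0) : (a + b) ⊓ c = 0 := by
  have hle : c ⊓ (a + b) ≤ c ⊓ a + c ⊓ b := inf_add_le3 ha hb hc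
  rw [inf_comm c a, inf_comm c b, h1, h2, add_zero] at hle
  rw [inf_comm]
  exact le_antisymm hle (le_inf hc (add_nonneg ha hb))

lemma inf_zero_mono {a b a' b' : α} (ha : 0 ≤ a) (hb : 0 ≤ b) (haa : a ≤ a') (hbb : b ≤ b')
    (h : a' ⊓ b' = 0) : a ⊓ b = 0 :=
  le_antisymm (le_trans (inf_le_inf haa hbb) h.le) (le_inf ha hb)

/-- For disjoint `u v`, `|u| ≤ |u + v|`. -/
lemma abs_le_abs_add_of_disj {u v : α} (h : |u| ⊓ |v| = 0) : |u| ≤ |u + v| := by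
  have h0 : |u| ≤ |u + v| + |v| := by
    calc |u| = |u + v + -v| := by rw [add_neg_cancel_right]
    _ ≤ |u + v| + |-v| := abs_add_le _ _
    _ = |u + v| + |v| := by rw [abs_neg]
  have h1 : |u| = |u| ⊓ (|u + v| + |v|) := (inf_eq_left.mpr h0).symm
  calc |u| = |u| ⊓ (|u + v| + |v|) := h1
  _ ≤ |u| ⊓ |u + v| + |u| ⊓ |v| := inf_add_le3 (abs_nonneg _) (abs_nonneg _) (abs_nonneg _)
  _ = |u| ⊓ |u + v| := by rw [h, add_zero]
  _ ≤ |u + v| := inf_le_right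

/-- For disjoint `u v`, `|u + v| = |u| + |v|`. -/
lemma abs_add_of_disj {u v : α} (h : |u| ⊓ |v| = 0) : |u + v| = |u| + |v| := by
  refine le_antisymm (abs_add_le _ _) ?_
  have h1 : |u| ≤ |u + v| := abs_le_abs_add_of_disj h
  have h2 : |v| ≤ |u + v| := by
    rw [add_comm]; exact abs_le_abs_add_of_disj (by rwa [inf_comm])
  calc |u| + |v| = |u| ⊓ |v| + (|u| ⊔ |v|) := (inf_add_sup _ _).symm
  _ = |u| ⊔ |v| := by rw [h, zero_add]
  _ ≤ |u + v| := sup_le h1 h2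

/-- `0` is a fragment of every `x`. -/
lemma frag_zero (x : α) : Fragment (0 : α) x := by
  simp only [Fragment, abs_zero, sub_zero]
  exact le_antisymm inf_le_left (le_inf le_rfl (abs_nonneg _))

lemma frag_self (x : α) : Fragment x x := by
  simp only [Fragment, sub_self, abs_zero]
  exact le_antisymm inf_le_right (le_inf (abs_nonneg _) le_rfl)

lemma frag_compl {y x : α} (h : Fragment y x) : Fragment (x - y) x := by
  simp only [Fragment] at h ⊢
  rw [sub_sub_cancel, inf_comm]
  exact h

lemma frag_abs_eq {y x : α} (h : Fragment y x) : |x| = |y| + |x - y| := by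
  have := abs_add_of_disj h
  rwa [add_sub_cancel] at this

lemma frag_abs_le {y x : α} (h : Fragment y x) : |y| ≤ |x| := by
  rw [frag_abs_eq h]
  exact le_add_of_nonneg_right (abs_nonneg _)

/-- Fragment of a fragment complement combines: `y ⊑ x`, `z ⊑ x - y` gives
`y + z ⊑ x` and `y ⊥ z`. -/
lemma frag_add {y z x : α} (hy : Fragment y x) (hz : Fragment z (x - y)) :
    Fragment (y + z) x ∧ |y| ⊓ |z| = 0 := by
  have hyz : |y| ⊓ |z| = 0 :=
    inf_zero_mono (abs_nonneg _) (abs_nonneg _) le_rfl (frag_abs_le hz) hy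
  refine ⟨?_, hyz⟩
  have habs : |y + z| = |y| + |z| := abs_add_of_disj hyz
  have hxz : x - (y + z) = (x - y) - z := by abel
  simp only [Fragment, habs, hxz]
  have h1 : |y| ⊓ |x - y - z| = 0 :=
    inf_zero_mono (abs_nonneg _) (abs_nonneg _) le_rfl (frag_abs_le (frag_compl hz)) hy
  have h2 : |z| ⊓ |x - y - z| = 0 := hz
  exact add_inf_zero (abs_nonneg _) (abs_nonneg _) (abs_nonneg _) h1 h2

/-- Fragments of disjoint elements add. -/
lemma frag_pair {y1 y2 x1 x2 : α} (hx : |x1| ⊓ |x2| = 0)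
    (h1 : Fragment y1 x1) (h2 : Fragment y2 x2) :
    Fragment (y1 + y2) (x1 + x2) ∧ |y1| ⊓ |y2| = 0 := by
  have hy12 : |y1| ⊓ |y2| = 0 :=
    inf_zero_mono (abs_nonneg _) (abs_nonneg _) (frag_abs_le h1) (frag_abs_le h2) hx
  refine ⟨?_, hy12⟩
  have hw12 : |x1 - y1| ⊓ |x2 - y2| = 0 :=
    inf_zero_mono (abs_nonneg _) (abs_nonneg _) (frag_abs_le (frag_compl h1))
      (frag_abs_le (frag_compl h2)) hx
  have habs : |y1 + y2| = |y1| + |y2| := abs_add_of_disj hy12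
  have hsub : x1 + x2 - (y1 + y2) = (x1 - y1) + (x2 - y2) := by abel
  have habs2 : |(x1 - y1) + (x2 - y2)| = |x1 - y1| + |x2 - y2| := abs_add_of_disj hw12
  simp only [Fragment, habs, hsub, habs2]
  have k1 : |y1| ⊓ (|x1 - y1| + |x2 - y2|) = 0 := by
    rw [inf_comm]
    refine add_inf_zero (abs_nonneg _) (abs_nonneg _) (abs_nonneg _) ?_ ?_
    · rw [inf_comm]; exact h1
    · rw [inf_comm]
      exact inf_zero_mono (abs_nonneg _) (abs_nonneg _) (frag_abs_le h1)
        (frag_abs_le (frag_compl h2)) hx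
  have k2 : |y2| ⊓ (|x1 - y1| + |x2 - y2|) = 0 := by
    rw [inf_comm]
    refine add_inf_zero (abs_nonneg _) (abs_nonneg _) (abs_nonneg _) ?_ ?_
    · rw [inf_comm]
      exact inf_zero_mono (abs_nonneg _) (abs_nonneg _) (frag_abs_le h2)
        (frag_abs_le (frag_compl h1)) (by rwa [inf_comm] at hx)
    · rw [inf_comm]; exact h2
  exact add_inf_zero (abs_nonneg _) (abs_nonneg _)
    (add_nonneg (abs_nonneg _) (abs_nonneg _)) k1 k2

end LatGrp
end Stmt19Aux
namespace Stmt19Aux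
section LatGrp
variable {α : Type*} [Lattice α] [AddCommGroup α] [CovariantClass α α (· + ·) (· ≤ ·)]

/-- Splitting of a positive element dominated by a disjoint sum. -/
lemma split_pos {p a b : α} (ha : 0 ≤ a) (hb : 0 ≤ b) (hab : a ⊓ b = 0)
    (hp0 : 0 ≤ p) (hp : p ≤ a + b) : p = p ⊓ a + p ⊓ b := by
  refine le_antisymm ?_ ?_
  · calc p = p ⊓ (a + b) := (inf_eq_left.mpr hp).symm
    _ ≤ p ⊓ a + p ⊓ b := inf_add_le3 ha hb hp0
  · have hdisj : (p ⊓ a) ⊓ (p ⊓ b) = 0 :=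
      inf_zero_mono (le_inf hp0 ha) (le_inf hp0 hb) inf_le_right inf_le_right hab
    calc p ⊓ a + p ⊓ b = (p ⊓ a) ⊓ (p ⊓ b) + ((p ⊓ a) ⊔ (p ⊓ b)) := (inf_add_sup _ _).symm
    _ = (p ⊓ a) ⊔ (p ⊓ b) := by rw [hdisj, zero_add]
    _ ≤ p := sup_le inf_le_left inf_le_left

/-- The `a`-component of `s`. -/
private def comp (a s : α) : α := (s ⊔ 0) ⊓ a - (-s ⊔ 0) ⊓ a

lemma comp_abs_le {a s : α} (ha : 0 ≤ a) : |comp a s| ≤ a ⊓ |s| := by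
  have hP : (s ⊔ 0) ⊓ a ≤ a ⊓ |s| :=
    le_inf inf_le_right (inf_le_left.trans (sup_le (le_abs_self s) (abs_nonneg s)))
  have hQ : (-s ⊔ 0) ⊓ a ≤ a ⊓ |s| :=
    le_inf inf_le_right (inf_le_left.trans (sup_le (neg_le_abs s) (abs_nonneg s)))
  have hP0 : 0 ≤ (s ⊔ 0) ⊓ a := le_inf le_sup_right ha
  have hQ0 : 0 ≤ (-s ⊔ 0) ⊓ a := le_inf le_sup_right ha
  rw [abs_le']
  constructor
  · exact (sub_le_self _ hQ0).trans hP
  · rw [comp, neg_sub]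
    exact (sub_le_self _ hP0).trans hQ

lemma comp_add {a b s : α} (ha : 0 ≤ a) (hb : 0 ≤ b) (hab : a ⊓ b = 0)
    (hs : |s| ≤ a + b) : comp a s + comp b s = s := by
  have hpos : s ⊔ 0 = (s ⊔ 0) ⊓ a + (s ⊔ 0) ⊓ b :=
    split_pos ha hb hab le_sup_right
      ((sup_le (le_abs_self s) (abs_nonneg s)).trans hs)
  have hneg : -s ⊔ 0 = (-s ⊔ 0) ⊓ a + (-s ⊔ 0) ⊓ b :=
    split_pos ha hb hab le_sup_right
      ((sup_le (neg_le_abs s) (abs_nonneg s)).trans hs)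
  have hdiff : (s ⊔ 0) - (-s ⊔ 0) = s := by
    rw [sub_eq_add_neg, neg_sup, neg_neg, neg_zero, add_comm, inf_add_sup, add_zero]
  calc comp a s + comp b s
      = ((s ⊔ 0) ⊓ a + (s ⊔ 0) ⊓ b) - ((-s ⊔ 0) ⊓ a + (-s ⊔ 0) ⊓ b) := by
        simp only [comp]; abel
  _ = (s ⊔ 0) - (-s ⊔ 0) := by rw [← hpos, ← hneg]
  _ = s := hdiff

end LatGrp
end Stmt19Aux
namespace Stmt19Aux
section LatGrp
variable {α : Type*} [Lattice α] [AddCommGroup α] [CovariantClass α α (· + ·) (· ≤ ·)]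

/-- Decomposition of a fragment of a disjoint sum. -/
lemma frag_decomp {x1 x2 z : α} (hx : |x1| ⊓ |x2| = 0) (hz : Fragment z (x1 + x2)) :
    ∃ z1 z2 : α, z = z1 + z2 ∧ Fragment z1 x1 ∧ Fragment z2 x2 ∧ |z1| ⊓ |z2| = 0 := by
  set a := |x1| with ha_def
  set b := |x2| with hb_def
  have ha : 0 ≤ a := abs_nonneg _
  have hb : 0 ≤ b := abs_nonneg _
  set w := x1 + x2 - z with hw_def
  have hzw : |z| ⊓ |w| = 0 := hz
  have habz : |z| ≤ a + b := (frag_abs_le hz).trans (abs_add_le _ _)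
  have habw : |w| ≤ a + b := (frag_abs_le (frag_compl hz)).trans (abs_add_le _ _)
  set z1 := comp a z with hz1
  set z2 := comp b z with hz2
  set w1 := comp a w with hw1
  set w2 := comp b w with hw2
  have hzsum : z1 + z2 = z := comp_add ha hb hx habz
  have hwsum : w1 + w2 = w := comp_add ha hb hx habw
  have hz1a : |z1| ≤ a ⊓ |z| := comp_abs_le ha
  have hz2b : |z2| ≤ b ⊓ |z| := comp_abs_le hb
  have hw1a : |w1| ≤ a ⊓ |w| := comp_abs_le ha
  have hw2b : |w2| ≤ b ⊓ |w| := comp_abs_le hb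
  -- the error term
  set d := z1 + w1 - x1 with hd_def
  have he1 : (z1 + w1) + (z2 + w2) = x1 + x2 := by
    have : z + w = x1 + x2 := by rw [hw_def]; abel
    calc (z1 + w1) + (z2 + w2) = (z1 + z2) + (w1 + w2) := by abel
    _ = z + w := by rw [hzsum, hwsum]
    _ = x1 + x2 := this
  have hd2 : d = x2 - (z2 + w2) := by
    have : x2 = (z1 + w1) + (z2 + w2) - x1 := by rw [he1]; abel
    rw [hd_def, this]; abel
  -- |d| ⊓ b = 0
  have hdb : |d| ⊓ b = 0 := by
    have hle : |d| ≤ |z1| + |w1| + a := by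
      calc |d| ≤ |z1 + w1| + |x1| := by
            rw [hd_def, sub_eq_add_neg]
            exact (abs_add_le _ _).trans (by rw [abs_neg])
      _ ≤ |z1| + |w1| + a := by
            exact add_le_add_left (abs_add_le _ _) a
    refine inf_zero_mono (abs_nonneg _) hb hle le_rfl ?_
    refine add_inf_zero (add_nonneg (abs_nonneg _) (abs_nonneg _)) ha hb ?_ hx
    refine add_inf_zero (abs_nonneg _) (abs_nonneg _) hb ?_ ?_
    · exact inf_zero_mono (abs_nonneg _) hb (hz1a.trans inf_le_left) le_rfl hx
    · exact inf_zero_mono (abs_nonneg _) hb (hw1a.trans inf_le_left) le_rfl hx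
  -- |d| ⊓ a = 0
  have hda : |d| ⊓ a = 0 := by
    have hle : |d| ≤ b + (|z2| + |w2|) := by
      calc |d| = |x2 - (z2 + w2)| := by rw [hd2]
      _ ≤ |x2| + |z2 + w2| := by
            rw [sub_eq_add_neg]
            exact (abs_add_le _ _).trans (by rw [abs_neg])
      _ ≤ b + (|z2| + |w2|) := add_le_add_right (abs_add_le _ _) b
    refine inf_zero_mono (abs_nonneg _) ha hle le_rfl ?_
    refine add_inf_zero hb (add_nonneg (abs_nonneg _) (abs_nonneg _)) ha
      (by rwa [inf_comm] at hx) ?_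
    refine add_inf_zero (abs_nonneg _) (abs_nonneg _) ha ?_ ?_
    · exact inf_zero_mono (abs_nonneg _) ha (hz2b.trans inf_le_left) le_rfl
        (by rwa [inf_comm] at hx)
    · exact inf_zero_mono (abs_nonneg _) ha (hw2b.trans inf_le_left) le_rfl
        (by rwa [inf_comm] at hx)
  -- d = 0
  have hd0 : d = 0 := by
    have h3 : |d| ≤ (a + b) + (a + b) + (a + b) := by
      have h1 : |d| ≤ |z1| + |w1| + a := by
        calc |d| ≤ |z1 + w1| + |x1| := by
              rw [hd_def, sub_eq_add_neg]
              exact (abs_add_le _ _).trans (by rw [abs_neg])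
        _ ≤ |z1| + |w1| + a := add_le_add_left (abs_add_le _ _) a
      refine h1.trans ?_
      have t1 : |z1| ≤ a + b := (hz1a.trans inf_le_left).trans (le_add_of_nonneg_right hb)
      have t2 : |w1| ≤ a + b := (hw1a.trans inf_le_left).trans (le_add_of_nonneg_right hb)
      have t3 : a ≤ a + b := le_add_of_nonneg_right hb
      exact add_le_add (add_le_add t1 t2) t3
    have hdab : |d| ⊓ (a + b) = 0 := by
      rw [inf_comm]
      exact add_inf_zero ha hb (abs_nonneg _) (by rwa [inf_comm] at hda)
        (by rwa [inf_comm] at hdb)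
    have habn : 0 ≤ a + b := add_nonneg ha hb
    have : |d| ≤ 0 := by
      calc |d| = |d| ⊓ ((a + b) + (a + b) + (a + b)) := (inf_eq_left.mpr h3).symm
      _ ≤ |d| ⊓ ((a + b) + (a + b)) + |d| ⊓ (a + b) :=
            inf_add_le3 (add_nonneg habn habn) habn (abs_nonneg _)
      _ ≤ (|d| ⊓ (a + b) + |d| ⊓ (a + b)) + |d| ⊓ (a + b) :=
            add_le_add_left (inf_add_le3 habn habn (abs_nonneg _)) _
      _ = 0 := by rw [hdab]; simp
    have h4 : d ≤ 0 := (le_abs_self d).trans this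
    have h5 : -d ≤ 0 := (neg_le_abs d).trans this
    have h6 : 0 ≤ d := by simpa using neg_nonneg.mpr h5
    exact le_antisymm h4 h6
  have hx1z1 : x1 - z1 = w1 := by
    have : z1 + w1 = x1 := by
      have := hd0
      rw [hd_def, sub_eq_zero] at this
      exact this
    rw [← this]; abel
  have hx2z2 : x2 - z2 = w2 := by
    have : x2 = z2 + w2 := by
      have := hd2
      rw [hd0, eq_comm, sub_eq_zero] at this
      exact this
    rw [this]; abel
  refine ⟨z1, z2, hzsum.symm, ?_, ?_, ?_⟩
  · show |z1| ⊓ |x1 - z1| = 0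
    rw [hx1z1]
    exact inf_zero_mono (abs_nonneg _) (abs_nonneg _) (hz1a.trans inf_le_right)
      (hw1a.trans inf_le_right) hzw
  · show |z2| ⊓ |x2 - z2| = 0
    rw [hx2z2]
    exact inf_zero_mono (abs_nonneg _) (abs_nonneg _) (hz2b.trans inf_le_right)
      (hw2b.trans inf_le_right) hzw
  · exact inf_zero_mono (abs_nonneg _) (abs_nonneg _) (hz1a.trans inf_le_left)
      (hz2b.trans inf_le_left) hx

/-- Common refinement of two fragments of `x` inside an admissible set. -/
lemma frag_refine {D : Set α} (hD : Admissible D) {x y y' : α}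
    (hy : Fragment y x) (hyD : y ∈ D) (hy' : Fragment y' x) (hy'D : y' ∈ D) :
    ∃ y'' : α, Fragment y'' x ∧ y'' ∈ D ∧ Fragment y y'' ∧ Fragment y' y'' := by
  have hx : |y| ⊓ |x - y| = 0 := hy
  have hz : Fragment y' (y + (x - y)) := by rwa [add_sub_cancel]
  obtain ⟨u1, u2, hsum, hu1, hu2, hu12⟩ := frag_decomp hx hz
  have hu2y' : Fragment u2 y' := by
    show |u2| ⊓ |y' - u2| = 0
    have : y' - u2 = u1 := by rw [hsum]; abel
    rw [this, inf_comm]; exact hu12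
  have hu2D : u2 ∈ D := hD.1 y' hy'D u2 hu2y'
  have hu2disj : |y| ⊓ |u2| = 0 :=
    inf_zero_mono (abs_nonneg _) (abs_nonneg _) le_rfl (frag_abs_le hu2) hx
  refine ⟨y + u2, (frag_add hy hu2).1, hD.2 y hyD u2 hu2D hu2disj, ?_, ?_⟩
  · show |y| ⊓ |y + u2 - y| = 0
    rw [add_sub_cancel_left]
    exact hu2disj
  · show |y'| ⊓ |y + u2 - y'| = 0
    have heq : y + u2 - y' = y - u1 := by rw [hsum]; abel
    rw [heq]
    have h1 : |u1| ⊓ |y - u1| = 0 := hu1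
    have h2 : |u2| ⊓ |y - u1| = 0 :=
      inf_zero_mono (abs_nonneg _) (abs_nonneg _) (frag_abs_le hu2)
        (frag_abs_le (frag_compl hu1)) (by rwa [inf_comm] at hx)
    have h3 : (|u1| + |u2|) ⊓ |y - u1| = 0 :=
      add_inf_zero (abs_nonneg _) (abs_nonneg _) (abs_nonneg _) h1 h2
    refine inf_zero_mono (abs_nonneg _) (abs_nonneg _) ?_ le_rfl h3
    rw [hsum]; exact abs_add_le _ _

end LatGrp
end Stmt19Aux
namespace Stmt19Aux
section BandProj
variable {F : Type*} [ConditionallyCompleteLattice F] [AddCommGroup F]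
  [CovariantClass F F (· + ·) (· ≤ ·)] {ρ : F → F} (hρ : IsBandProj ρ)

include hρ

lemma rho_zero : ρ 0 = 0 := by
  have := hρ.1 0 0
  rw [add_zero] at this
  exact (left_eq_add.mp this)

lemma rho_mono {a b : F} (h : a ≤ b) : ρ a ≤ ρ b := by
  have hb : ρ b = ρ a + ρ (b - a) := by
    rw [← hρ.1, add_sub_cancel]
  rw [hb]
  exact le_add_of_nonneg_right (hρ.2.2 _ (sub_nonneg.mpr h)).1

lemma rho_sub_self {a : F} : ρ (a - ρ a) = 0 := by
  have := hρ.1 (a - ρ a) (ρ a)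
  rw [sub_add_cancel, hρ.2.1] at this
  have h2 : ρ a = ρ (a - ρ a) + ρ a := by rw [← this]
  exact (right_eq_add.mp h2)

lemma rho_sSup {A : Set F} (hne : A.Nonempty) (hbdd : BddAbove A) :
    ρ (sSup A) = sSup (ρ '' A) := by
  have hub : ∀ v ∈ A, ρ v ≤ ρ (sSup A) := fun v hv => rho_mono hρ (le_csSup hbdd hv)
  have hbdd' : BddAbove (ρ '' A) := ⟨ρ (sSup A), by rintro _ ⟨v, hv, rfl⟩; exact hub v hv⟩
  refine le_antisymm ?_ (csSup_le (hne.image ρ) (by rintro _ ⟨v, hv, rfl⟩; exact hub v hv))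
  set u := sSup A
  set s := sSup (ρ '' A)
  have key : ∀ v ∈ A, v ≤ u - ρ u + s := by
    intro v hv
    have h1 : ρ u = ρ v + ρ (u - v) := by rw [← hρ.1, add_sub_cancel]
    have h2 : ρ v ≤ s := le_csSup hbdd' ⟨v, hv, rfl⟩
    have h3 : ρ (u - v) ≤ u - v := (hρ.2.2 _ (sub_nonneg.mpr (le_csSup hbdd hv))).2
    have h4 : ρ u ≤ s + (u - v) := by rw [h1]; exact add_le_add h2 h3
    have := sub_le_iff_le_add.mpr h4
    -- from ρ u - (u - v) ≤ s, i.e. v ≤ u - ρ u + s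
    have h5 : ρ u - s ≤ u - v := by
      rw [sub_le_iff_le_add, add_comm]
      exact h4.trans (by rw [add_comm])
    calc v = u - (u - v) := by abel
    _ ≤ u - (ρ u - s) := by
          exact sub_le_sub_left h5 u
    _ = u - ρ u + s := by abel
  have : u ≤ u - ρ u + s := csSup_le hne key
  have h6 := sub_le_iff_le_add.mpr this
  -- u - s ≤ u - ρ u  hence ρ u ≤ s
  calc ρ u = u - (u - ρ u) := by abel
  _ ≤ u - (u - s) := sub_le_sub_left h6 u
  _ = s := by abel

lemma rho_posPart_fix {f g : F} (hg : 0 ≤ g) (hf : f ≤ ρ g) : f ⊔ 0 = ρ (f ⊔ 0) := by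
  have hρg : 0 ≤ ρ g := (hρ.2.2 g hg).1
  have hp0 : (0 : F) ≤ f ⊔ 0 := le_sup_right
  have hpg : f ⊔ 0 ≤ ρ g := sup_le hf hρg
  have h1 : 0 ≤ (f ⊔ 0) - ρ (f ⊔ 0) := sub_nonneg.mpr (hρ.2.2 _ hp0).2
  have h2 : (f ⊔ 0) - ρ (f ⊔ 0) ≤ ρ g - ρ (ρ g) := by
    have hmono : ρ (f ⊔ 0) + ρ (ρ g - (f ⊔ 0)) = ρ (ρ g) := by
      rw [← hρ.1, add_sub_cancel]
    have h3 : 0 ≤ ρ (ρ g - (f ⊔ 0)) := (hρ.2.2 _ (sub_nonneg.mpr hpg)).1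
    have h4 : ρ (ρ g - (f ⊔ 0)) ≤ ρ g - (f ⊔ 0) := (hρ.2.2 _ (sub_nonneg.mpr hpg)).2
    have h5 : ρ (ρ g) - ρ (f ⊔ 0) ≤ ρ g - (f ⊔ 0) := by
      rw [← hmono]
      simpa using h4
    -- rearrange
    have := sub_le_sub_right h5 0
    rw [sub_zero, sub_zero] at this
    -- ρ(ρg) - ρ(f⊔0) ≤ ρ g - (f⊔0)  ⟺  (f⊔0) - ρ(f⊔0) ≤ ρ g - ρ(ρ g)
    have h6 : (f ⊔ 0) + (ρ (ρ g) - ρ (f ⊔ 0)) ≤ (f ⊔ 0) + (ρ g - (f ⊔ 0)) :=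
      add_le_add_right h5 _
    calc (f ⊔ 0) - ρ (f ⊔ 0) = (f ⊔ 0) + (ρ (ρ g) - ρ (f ⊔ 0)) - ρ (ρ g) := by abel
    _ ≤ (f ⊔ 0) + (ρ g - (f ⊔ 0)) - ρ (ρ g) := sub_le_sub_right h6 _
    _ = ρ g - ρ (ρ g) := by abel
  rw [hρ.2.1, sub_self] at h2
  have := le_antisymm h2 h1
  rw [sub_eq_zero] at this
  exact this

end BandProj
end Stmt19Aux
namespace Stmt19Aux
section Op
variable {E F : Type*} [Lattice E] [AddCommGroup E]
  [CovariantClass E E (· + ·) (· ≤ ·)]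
  [ConditionallyCompleteLattice F] [AddCommGroup F]
  [CovariantClass F F (· + ·) (· ≤ ·)]

/-- The set whose supremum defines `π^D T x`. -/
def FragSet (D : Set E) (T : E → F) (x : E) : Set F :=
  {v : F | ∃ y : E, Fragment y x ∧ y ∈ D ∧ v = T y}

variable {D : Set E} {T : E → F}

lemma T_zero (hT : OrthAdd T) : T 0 = 0 := by
  have h0 : |(0 : E)| ⊓ |(0 : E)| = 0 := by simp
  have := hT 0 0 h0
  rw [add_zero] at this
  exact (left_eq_add.mp this)

lemma T_mono (hT : OrthAdd T) (hTp : ∀ x, 0 ≤ T x) {y x : E} (h : Fragment y x) :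
    T y ≤ T x := by
  have := hT y (x - y) h
  rw [add_sub_cancel] at this
  rw [this]
  exact le_add_of_nonneg_right (hTp _)

lemma fragSet_zero_mem (hT : OrthAdd T) (hD0 : (0 : E) ∈ D) (x : E) :
    (0 : F) ∈ FragSet D T x :=
  ⟨0, frag_zero x, hD0, (T_zero hT).symm⟩

lemma fragSet_nonempty (hT : OrthAdd T) (hD0 : (0 : E) ∈ D) (x : E) :
    (FragSet D T x).Nonempty :=
  ⟨0, fragSet_zero_mem hT hD0 x⟩

lemma fragSet_bdd (hT : OrthAdd T) (hTp : ∀ x, 0 ≤ T x) (x : E) :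
    BddAbove (FragSet D T x) := by
  refine ⟨T x, ?_⟩
  rintro v ⟨y, hy, _, rfl⟩
  exact T_mono hT hTp hy

lemma sSup_fragSet_nonneg (hT : OrthAdd T) (hTp : ∀ x, 0 ≤ T x) (hD0 : (0 : E) ∈ D) (x : E) :
    0 ≤ sSup (FragSet D T x) :=
  le_csSup (fragSet_bdd hT hTp x) (fragSet_zero_mem hT hD0 x)

lemma sSup_fragSet_le (hT : OrthAdd T) (hTp : ∀ x, 0 ≤ T x) (hD0 : (0 : E) ∈ D) (x : E) :
    sSup (FragSet D T x) ≤ T x := by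
  refine csSup_le (fragSet_nonempty hT hD0 x) ?_
  rintro v ⟨y, hy, _, rfl⟩
  exact T_mono hT hTp hy

lemma sSup_fragSet_self (hT : OrthAdd T) (hTp : ∀ x, 0 ≤ T x) (hD0 : (0 : E) ∈ D)
    {y : E} (hyD : y ∈ D) : sSup (FragSet D T y) = T y :=
  le_antisymm (sSup_fragSet_le hT hTp hD0 y)
    (le_csSup (fragSet_bdd hT hTp y) ⟨y, frag_self y, hyD, rfl⟩)

/-- Orthogonal additivity at the level of suprema. -/
lemma sSup_fragSet_orth (hD : Admissible D) (hD0 : (0 : E) ∈ D)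
    (hT : OrthAdd T) (hTp : ∀ x, 0 ≤ T x) {x1 x2 : E} (hx : |x1| ⊓ |x2| = 0) :
    sSup (FragSet D T (x1 + x2)) = sSup (FragSet D T x1) + sSup (FragSet D T x2) := by
  have bdd1 := fragSet_bdd (D := D) hT hTp x1
  have bdd2 := fragSet_bdd (D := D) hT hTp x2
  have bdd12 := fragSet_bdd (D := D) hT hTp (x1 + x2)
  refine le_antisymm ?_ ?_
  · refine csSup_le (fragSet_nonempty hT hD0 _) ?_
    rintro v ⟨z, hz, hzD, rfl⟩
    obtain ⟨z1, z2, hsum, hz1, hz2, hdisj⟩ := frag_decomp hx hz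
    have hz1z : Fragment z1 z := by
      show |z1| ⊓ |z - z1| = 0
      have : z - z1 = z2 := by rw [hsum]; abel
      rwa [this]
    have hz2z : Fragment z2 z := by
      show |z2| ⊓ |z - z2| = 0
      have : z - z2 = z1 := by rw [hsum]; abel
      rw [this, inf_comm]; exact hdisj
    have hz1D : z1 ∈ D := hD.1 z hzD z1 hz1z
    have hz2D : z2 ∈ D := hD.1 z hzD z2 hz2z
    have : T z = T z1 + T z2 := by rw [hsum]; exact hT z1 z2 hdisj
    rw [this]
    exact add_le_add (le_csSup bdd1 ⟨z1, hz1, hz1D, rfl⟩) (le_csSup bdd2 ⟨z2, hz2, hz2D, rfl⟩)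
  · have h1 : sSup (FragSet D T x1) ≤ sSup (FragSet D T (x1 + x2)) - sSup (FragSet D T x2) := by
      refine csSup_le (fragSet_nonempty hT hD0 _) ?_
      rintro _ ⟨y1, hy1, hy1D, rfl⟩
      rw [le_sub_comm]
      refine csSup_le (fragSet_nonempty hT hD0 _) ?_
      rintro _ ⟨y2, hy2, hy2D, rfl⟩
      rw [le_sub_iff_add_le']
      obtain ⟨hfrag, hdisj⟩ := frag_pair hx hy1 hy2
      have hmem : y1 + y2 ∈ D := hD.2 y1 hy1D y2 hy2D hdisj
      have : T y1 + T y2 = T (y1 + y2) := (hT y1 y2 hdisj).symm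
      rw [this]
      exact le_csSup bdd12 ⟨y1 + y2, hfrag, hmem, rfl⟩
    exact le_sub_iff_add_le.mp h1

/-- Additivity of the fragment supremum in the operator argument. -/
lemma sSup_fragSet_add_op (hD : Admissible D) (hD0 : (0 : E) ∈ D)
    {T₁ T₂ : E → F} (hT₁ : OrthAdd T₁) (hT₁p : ∀ x, 0 ≤ T₁ x)
    (hT₂ : OrthAdd T₂) (hT₂p : ∀ x, 0 ≤ T₂ x) (x : E) :
    sSup (FragSet D (fun y => T₁ y + T₂ y) x) =
      sSup (FragSet D T₁ x) + sSup (FragSet D T₂ x) := by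
  have hT₁₂ : OrthAdd (fun y => T₁ y + T₂ y) := by
    intro u v huv
    simp only [hT₁ u v huv, hT₂ u v huv]
    abel
  have hT₁₂p : ∀ y, 0 ≤ T₁ y + T₂ y := fun y => add_nonneg (hT₁p y) (hT₂p y)
  have bdd1 := fragSet_bdd (D := D) hT₁ hT₁p x
  have bdd2 := fragSet_bdd (D := D) hT₂ hT₂p x
  have bdd12 := fragSet_bdd (D := D) hT₁₂ hT₁₂p x
  refine le_antisymm ?_ ?_
  · refine csSup_le (fragSet_nonempty hT₁₂ hD0 _) ?_
    rintro _ ⟨y, hy, hyD, rfl⟩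
    exact add_le_add (le_csSup bdd1 ⟨y, hy, hyD, rfl⟩) (le_csSup bdd2 ⟨y, hy, hyD, rfl⟩)
  · have h1 : sSup (FragSet D T₁ x) ≤
        sSup (FragSet D (fun y => T₁ y + T₂ y) x) - sSup (FragSet D T₂ x) := by
      refine csSup_le (fragSet_nonempty hT₁ hD0 _) ?_
      rintro _ ⟨y, hy, hyD, rfl⟩
      rw [le_sub_comm]
      refine csSup_le (fragSet_nonempty hT₂ hD0 _) ?_
      rintro _ ⟨y', hy', hy'D, rfl⟩
      rw [le_sub_iff_add_le']
      obtain ⟨y'', hy'', hy''D, hfr1, hfr2⟩ := frag_refine hD hy hyD hy' hy'D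
      have k1 : T₁ y ≤ T₁ y'' := T_mono hT₁ hT₁p hfr1
      have k2 : T₂ y' ≤ T₂ y'' := T_mono hT₂ hT₂p hfr2
      exact (add_le_add k1 k2).trans (le_csSup bdd12 ⟨y'', hy'', hy''D, rfl⟩)
    exact le_sub_iff_add_le.mp h1

end Op
end Stmt19Aux
open Stmt19Aux

/-- For a band projection `ρ` on the Dedekind complete `F` and an admissible `D ⊆ E`,
the map `Π : T ↦ ρ ∘ (π^D T)` satisfies `0 ≤ Π T ≤ T` for every positive abstract Uryson
operator `T` and `Π (Π T) = Π T`; hence (Aliprantis–Burkinshaw) `Π` is an order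
projection on `U(E,F)`: in particular `Π` is additive on positive Uryson operators and
`Π T` is a fragment of `T` (i.e. `Π T ⊥ (T - Π T)`). -/
theorem stmt19 {E F : Type} [Lattice E] [AddCommGroup E]
    [CovariantClass E E (· + ·) (· ≤ ·)] [Module ℝ E]
    [ConditionallyCompleteLattice F] [AddCommGroup F]
    [CovariantClass F F (· + ·) (· ≤ ·)] [Module ℝ F]
    (ρ : F → F) (hρ : IsBandProj ρ)
    (D : Set E) (hD : Admissible D) (hD0 : (0 : E) ∈ D) :
    (∀ T : E → F, Uryson T → (∀ x, 0 ≤ T x) →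
      (Uryson (PiProj ρ D T) ∧
        (∀ x, 0 ≤ PiProj ρ D T x ∧ PiProj ρ D T x ≤ T x) ∧
        PiProj ρ D (PiProj ρ D T) = PiProj ρ D T)) ∧
    (∀ T₁ T₂ : E → F, Uryson T₁ → (∀ x, 0 ≤ T₁ x) → Uryson T₂ → (∀ x, 0 ≤ T₂ x) →
      PiProj ρ D (fun x => T₁ x + T₂ x) =
        fun x => PiProj ρ D T₁ x + PiProj ρ D T₂ x) ∧
    (∀ T : E → F, Uryson T → (∀ x, 0 ≤ T x) →
      UDisjointPos (PiProj ρ D T) (fun x => T x - PiProj ρ D T x)) := by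
  have hpi : ∀ (T : E → F) (x : E), PiProj ρ D T x = ρ (sSup (FragSet D T x)) :=
    fun T x => rfl
  refine ⟨?_, ?_, ?_⟩
  · -- first bullet
    intro T hT hTp
    have hbdd : ∀ x, BddAbove (FragSet D T x) := fragSet_bdd hT.1 hTp
    have hne : ∀ x, (FragSet D T x).Nonempty := fragSet_nonempty hT.1 hD0
    have hs0 : ∀ x, 0 ≤ sSup (FragSet D T x) := sSup_fragSet_nonneg hT.1 hTp hD0
    have hbounds : ∀ x, 0 ≤ PiProj ρ D T x ∧ PiProj ρ D T x ≤ T x := by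
      intro x
      rw [hpi]
      exact ⟨(hρ.2.2 _ (hs0 x)).1,
        ((hρ.2.2 _ (hs0 x)).2).trans (sSup_fragSet_le hT.1 hTp hD0 x)⟩
    refine ⟨⟨?_, ?_⟩, hbounds, ?_⟩
    · -- orthogonal additivity
      intro x1 x2 hx
      rw [hpi, hpi, hpi, sSup_fragSet_orth hD hD0 hT.1 hTp hx, hρ.1]
    · -- order boundedness
      intro a b
      obtain ⟨c, d, h⟩ := hT.2 a b
      refine ⟨0, d, fun x hx => ⟨(hbounds x).1, (hbounds x).2.trans (h x hx).2⟩⟩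
    · -- idempotence
      funext x
      have hset : FragSet D (PiProj ρ D T) x = ρ '' (FragSet D T x) := by
        ext v
        constructor
        · rintro ⟨y, hy, hyD, rfl⟩
          exact ⟨T y, ⟨y, hy, hyD, rfl⟩, by
            rw [hpi, sSup_fragSet_self hT.1 hTp hD0 hyD]⟩
        · rintro ⟨_, ⟨y, hy, hyD, rfl⟩, rfl⟩
          exact ⟨y, hy, hyD, by rw [hpi, sSup_fragSet_self hT.1 hTp hD0 hyD]⟩
      rw [hpi, hpi, hset, ← rho_sSup hρ (hne x) (hbdd x), hρ.2.1]
  · -- second bullet: additivity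
    intro T₁ T₂ hT₁ hT₁p hT₂ hT₂p
    funext x
    rw [hpi, hpi, hpi, sSup_fragSet_add_op hD hD0 hT₁.1 hT₁p hT₂.1 hT₂p x, hρ.1]
  · -- third bullet: disjointness
    intro T hT hTp R hR h1 h2 x
    have hbdd : ∀ x, BddAbove (FragSet D T x) := fragSet_bdd hT.1 hTp
    have hne : ∀ x, (FragSet D T x).Nonempty := fragSet_nonempty hT.1 hD0
    have hs0 : ∀ x, 0 ≤ sSup (FragSet D T x) := sSup_fragSet_nonneg hT.1 hTp hD0
    set s := sSup (FragSet D T x) with hs_def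
    have hRx : R x ≤ ρ s := by
      have := h1 x
      rwa [hpi] at this
    have hfix : R x ⊔ 0 = ρ (R x ⊔ 0) := rho_posPart_fix hρ (hs0 x) hRx
    set P := R x ⊔ 0 with hP_def
    have key : ∀ y : E, Fragment y x → y ∈ D → P ≤ ρ s - ρ (T y) := by
      intro y hy hyD
      have hsy : sSup (FragSet D T y) = T y := sSup_fragSet_self hT.1 hTp hD0 hyD
      have hRy : R y ≤ T y - ρ (T y) := by
        have h : R y ≤ T y - PiProj ρ D T y := h2 y
        rw [hpi, hsy] at h
        exact h
      have hRxy : R (x - y) ≤ ρ (sSup (FragSet D T (x - y))) := by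
        have := h1 (x - y)
        rwa [hpi] at this
      have hx_split : R x = R y + R (x - y) := by
        have := hR.1 y (x - y) hy
        rwa [add_sub_cancel] at this
      have hb1 : 0 ≤ T y - ρ (T y) := sub_nonneg.mpr (hρ.2.2 (T y) (hTp y)).2
      have hb2 : 0 ≤ ρ (sSup (FragSet D T (x - y))) := (hρ.2.2 _ (hs0 (x - y))).1
      have hPle : P ≤ (T y - ρ (T y)) + ρ (sSup (FragSet D T (x - y))) := by
        refine sup_le ?_ (add_nonneg hb1 hb2)
        rw [hx_split]
        exact add_le_add hRy hRxy
      have hPrho : P ≤ ρ ((T y - ρ (T y)) + ρ (sSup (FragSet D T (x - y)))) := by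
        calc P = ρ P := hfix
        _ ≤ _ := rho_mono hρ hPle
      have hsimp : ρ ((T y - ρ (T y)) + ρ (sSup (FragSet D T (x - y)))) =
          ρ (sSup (FragSet D T (x - y))) := by
        rw [hρ.1, rho_sub_self hρ, hρ.2.1, zero_add]
      have hP2 : P ≤ ρ (sSup (FragSet D T (x - y))) := hsimp ▸ hPrho
      have hbound : ρ (sSup (FragSet D T (x - y))) ≤ ρ s - ρ (T y) := by
        rw [rho_sSup hρ (hne (x - y)) (hbdd (x - y))]
        refine csSup_le ((hne (x - y)).image ρ) ?_
        rintro _ ⟨_, ⟨z, hzf, hzD, rfl⟩, rfl⟩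
        rw [le_sub_iff_add_le']
        obtain ⟨hfr, hdisj⟩ := frag_add hy hzf
        rw [← hρ.1, ← hT.1 y z hdisj]
        exact rho_mono hρ (le_csSup (hbdd x) ⟨y + z, hfr, hD.2 y hyD z hzD hdisj, rfl⟩)
      exact hP2.trans hbound
    have hfin : sSup (ρ '' FragSet D T x) ≤ ρ s - P := by
      refine csSup_le ((hne x).image ρ) ?_
      rintro _ ⟨_, ⟨y, hy, hyD, rfl⟩, rfl⟩
      exact le_sub_comm.mp (key y hy hyD)
    have himg : ρ s = sSup (ρ '' FragSet D T x) := rho_sSup hρ (hne x) (hbdd x)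
    have hfin2 : ρ s + P ≤ ρ s := by
      have : ρ s ≤ ρ s - P := himg.le.trans hfin
      exact le_sub_iff_add_le.mp this
    have hP0 : P ≤ 0 := (add_le_iff_nonpos_right _).mp hfin2
    exact le_trans le_sup_left hP0
end
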